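/- arXiv:2602.18380 — 6 statements merged into one kernel-verified Lean document; each statement's English description precedes it below -/
import Mathlib

section
/- Let (A,B) and (A′,B′) be as in the type-one single column simulation with 4 ≤ K ≤ 8, let 0 ≤ ε < 1/(3n), and let (x*,y*) be an ε-WSNE of (A′,B′). Then for each column j < k of A with P(rbʲ) > 0, we have (1/3)·P(cb₁ʲ) − ε ≤ y*_{3j} ≤ (1/3)·P(cb₁ʲ) + ε. -/
open Finset
open scoped Classical

/-- `(x, y)` is an `ε`-well-supported Nash equilibrium of the bimatrix game with
`nr` rows, `nc` columns and payoff matrices `A` (row player) and `B` (column player). -/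
def IsWSNE (nr nc : ℕ) (A B : ℕ → ℕ → ℝ) (x y : ℕ → ℝ) (ε : ℝ) : Prop :=
  (∀ i, 0 ≤ x i) ∧ (∀ i, nr ≤ i → x i = 0) ∧ (∑ i ∈ range nr, x i = 1) ∧
  (∀ j, 0 ≤ y j) ∧ (∀ j, nc ≤ j → y j = 0) ∧ (∑ j ∈ range nc, y j = 1) ∧
  (∀ i < nr, 0 < x i → ∀ i' < nr,
    ∑ j ∈ range nc, A i j * y j ≥ ∑ j ∈ range nc, A i' j * y j - ε) ∧
  (∀ j < nc, 0 < y j → ∀ j' < nc,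
    ∑ i ∈ range nr, x i * B i j ≥ ∑ i ∈ range nr, x i * B i j' - ε)

/-- Input assumptions of the type-one single column simulation: `(A,B)` has at most
`n` rows and columns (`nr` rows, `nc` columns), all entries in `[0,K]`, every row
and column of `A` and `B` has an entry `≥ 1`, the columns of `A` containing `K` are
exactly the columns `j < k`, each such column contains exactly one `K`, its other
non-zero entries lie in `{1,2}` and are either at most two values from `{1,2}` or
at most three `1`s. -/
def Scs1Input (n nr nc k : ℕ) (K : ℝ) (A B : ℕ → ℕ → ℝ) : Prop :=
  nr ≤ n ∧ nc ≤ n ∧ k ≤ nc ∧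
  (∀ i < nr, ∀ j < nc, 0 ≤ A i j ∧ A i j ≤ K) ∧
  (∀ i < nr, ∀ j < nc, 0 ≤ B i j ∧ B i j ≤ K) ∧
  (∀ i < nr, ∃ j < nc, 1 ≤ A i j) ∧ (∀ j < nc, ∃ i < nr, 1 ≤ A i j) ∧
  (∀ i < nr, ∃ j < nc, 1 ≤ B i j) ∧ (∀ j < nc, ∃ i < nr, 1 ≤ B i j) ∧
  (∀ j < k,
    ((range nr).filter fun i => A i j = K).card = 1 ∧
    (∀ i < nr, A i j = 0 ∨ A i j = 1 ∨ A i j = 2 ∨ A i j = K) ∧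
    (((range nr).filter fun i => A i j = 1 ∨ A i j = 2).card ≤ 2 ∨
      (((range nr).filter fun i => A i j = 1).card ≤ 3 ∧ ∀ i < nr, A i j ≠ 2))) ∧
  (∀ j, k ≤ j → j < nc → ∀ i < nr, A i j ≠ K)

/-- The row player's payoff matrix `A'` of the type-one single column simulation.
It has `2k + nr` rows and `2k + nc` columns.  For each `j < k`: the block
`(rbʲ, cb₁ʲ) = ({2j,2j+1}, {3j,3j+1})` equals `S = [[2,0],[0,1]]`, the block
`(rbʲ, cb₂ʲ) = ({2j,2j+1}, {3j+2})` is all ones, and the block `(rb_e, cb₁ʲ)`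
equals `encode(A_j)` (each `1` of column `A_j` kept as a `1` in the first column,
each `2` replaced by a `1` in the second column, the `K` replaced by `K/2` in the
second column).  Columns `c ≥ 3k` restricted to `rb_e` equal the columns
`A_{k}, …, A_{nc-1}`; all other entries are `0`. -/
noncomputable def scs1A (k : ℕ) (K : ℝ) (A : ℕ → ℕ → ℝ) : ℕ → ℕ → ℝ := fun r c =>
  if r < 2*k then
    if c = 3*(r/2) then (if r % 2 = 0 then 2 else 0)
    else if c = 3*(r/2) + 1 then (if r % 2 = 0 then 0 else 1)
    else if c = 3*(r/2) + 2 then 1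
    else 0
  else
    if c < 3*k then
      (if c % 3 = 0 then (if A (r - 2*k) (c/3) = 1 then 1 else 0)
       else if c % 3 = 1 then
         (if A (r - 2*k) (c/3) = K then K/2
          else if A (r - 2*k) (c/3) = 2 then 1 else 0)
       else 0)
    else A (r - 2*k) (c - 2*k)

/-- The column player's payoff matrix `B'` of the type-one single column
simulation: for `j < k` the block `(rbʲ, cb₁ʲ)` equals `T = [[0,1],[1,0]]` and the
block `(rb_e, cb₂ʲ)` equals column `B_j`; columns `c ≥ 3k` restricted to `rb_e`
equal the columns `B_k, …, B_{nc-1}`; all other entries are `0`. -/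
noncomputable def scs1B (k : ℕ) (B : ℕ → ℕ → ℝ) : ℕ → ℕ → ℝ := fun r c =>
  if r < 2*k then
    if c = 3*(r/2) then (if r % 2 = 0 then 0 else 1)
    else if c = 3*(r/2) + 1 then (if r % 2 = 0 then 1 else 0)
    else 0
  else
    if c < 3*k then (if c % 3 = 2 then B (r - 2*k) (c/3) else 0)
    else B (r - 2*k) (c - 2*k)

/-- The (un-normalized) translated column strategy `y'`: for `j < k`,
`y'_j = y*_{3j}` if `P(cb₁ʲ) ≥ 11ε` and `0` otherwise; for `j ≥ k`,
`y'_j = y*_{3k + (j-k)}`. -/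
noncomputable def scs1Y (k : ℕ) (ε : ℝ) (ystar : ℕ → ℝ) : ℕ → ℝ := fun j =>
  if j < k then (if 11 * ε ≤ ystar (3*j) + ystar (3*j+1) then ystar (3*j) else 0)
  else ystar (2*k + j)

private lemma scs1_sum_split (N M : ℕ) (f : ℕ → ℝ) :
    ∑ r ∈ range (N + M), f r = (∑ r ∈ range N, f r) + ∑ i ∈ range M, f (N + i) := by
  induction M with
  | zero => simp
  | succ m ih => rw [← Nat.add_assoc, Finset.sum_range_succ, Finset.sum_range_succ, ih]; ring

private lemma scs1_colpay1 (k nr : ℕ) (B : ℕ → ℕ → ℝ) (x : ℕ → ℝ) {j : ℕ} (hj : j < k) :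
    ∑ r ∈ range (2*k+nr), x r * scs1B k B r (3*j) = x (2*j+1) := by
  rw [scs1_sum_split]
  have h1 : ∀ r ∈ range (2*k), x r * scs1B k B r (3*j) = if r = 2*j+1 then x r else 0 := by
    intro r hr
    simp only [mem_range] at hr
    simp only [scs1B, if_pos hr]
    split_ifs <;> first | ring1 | omega | (exfalso; omega)
  have h2 : ∀ i ∈ range nr, x (2*k+i) * scs1B k B (2*k+i) (3*j) = 0 := by
    intro i _
    simp only [scs1B]
    split_ifs <;> first | ring1 | omega | (exfalso; omega)
  rw [Finset.sum_congr rfl h1, Finset.sum_congr rfl h2, Finset.sum_ite_eq' (range (2*k)) (2*j+1) x]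
  rw [if_pos (mem_range.mpr (by omega))]
  simp

private lemma scs1_colpay2 (k nr : ℕ) (B : ℕ → ℕ → ℝ) (x : ℕ → ℝ) {j : ℕ} (hj : j < k) :
    ∑ r ∈ range (2*k+nr), x r * scs1B k B r (3*j+1) = x (2*j) := by
  rw [scs1_sum_split]
  have h1 : ∀ r ∈ range (2*k), x r * scs1B k B r (3*j+1) = if r = 2*j then x r else 0 := by
    intro r hr
    simp only [mem_range] at hr
    simp only [scs1B, if_pos hr]
    split_ifs <;> first | ring1 | omega | (exfalso; omega)
  have h2 : ∀ i ∈ range nr, x (2*k+i) * scs1B k B (2*k+i) (3*j+1) = 0 := by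
    intro i _
    simp only [scs1B]
    split_ifs <;> first | ring1 | omega | (exfalso; omega)
  rw [Finset.sum_congr rfl h1, Finset.sum_congr rfl h2, Finset.sum_ite_eq' (range (2*k)) (2*j) x]
  rw [if_pos (mem_range.mpr (by omega))]
  simp

private lemma scs1_colpay3 (k nr : ℕ) (B : ℕ → ℕ → ℝ) (x : ℕ → ℝ) {j : ℕ} (hj : j < k) :
    ∑ r ∈ range (2*k+nr), x r * scs1B k B r (3*j+2)
      = ∑ i ∈ range nr, x (2*k+i) * B i j := by
  rw [scs1_sum_split]
  have h1 : ∀ r ∈ range (2*k), x r * scs1B k B r (3*j+2) = 0 := by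
    intro r hr
    simp only [mem_range] at hr
    simp only [scs1B, if_pos hr]
    split_ifs <;> first | ring1 | omega | (exfalso; omega)
  have h2 : ∀ i ∈ range nr, x (2*k+i) * scs1B k B (2*k+i) (3*j+2) = x (2*k+i) * B i j := by
    intro i _
    simp only [scs1B]
    have e1 : ¬(2*k+i < 2*k) := by omega
    have e2 : 3*j+2 < 3*k := by omega
    have e3 : (3*j+2) % 3 = 2 := by omega
    have e4 : (3*j+2) / 3 = j := by omega
    have e5 : 2*k+i-2*k = i := by omega
    rw [if_neg e1, if_pos e2, if_pos e3, e4, e5]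
  rw [Finset.sum_congr rfl h1, Finset.sum_congr rfl h2]
  simp

private lemma scs1_colpay4 (k nr : ℕ) (B : ℕ → ℕ → ℝ) (x : ℕ → ℝ) {j : ℕ} (hj : k ≤ j) :
    ∑ r ∈ range (2*k+nr), x r * scs1B k B r (2*k+j)
      = ∑ i ∈ range nr, x (2*k+i) * B i j := by
  rw [scs1_sum_split]
  have h1 : ∀ r ∈ range (2*k), x r * scs1B k B r (2*k+j) = 0 := by
    intro r hr
    simp only [mem_range] at hr
    simp only [scs1B, if_pos hr]
    split_ifs <;> first | ring1 | omega | (exfalso; omega)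
  have h2 : ∀ i ∈ range nr, x (2*k+i) * scs1B k B (2*k+i) (2*k+j) = x (2*k+i) * B i j := by
    intro i _
    simp only [scs1B]
    have e1 : ¬(2*k+i < 2*k) := by omega
    have e2 : ¬(2*k+j < 3*k) := by omega
    have e5 : 2*k+i-2*k = i := by omega
    have e6 : 2*k+j-2*k = j := by omega
    rw [if_neg e1, if_neg e2, e5, e6]
  rw [Finset.sum_congr rfl h1, Finset.sum_congr rfl h2]
  simp

private lemma scs1_rowpay1 (k nc : ℕ) (K : ℝ) (A : ℕ → ℕ → ℝ) (y : ℕ → ℝ)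
    (hknc : k ≤ nc) {j : ℕ} (hj : j < k) :
    ∑ c ∈ range (2*k+nc), scs1A k K A (2*j) c * y c = 2 * y (3*j) + y (3*j+2) := by
  have h1 : ∀ c ∈ range (2*k+nc), scs1A k K A (2*j) c * y c
      = (if c = 3*j then 2 * y c else 0) + (if c = 3*j+2 then y c else 0) := by
    intro c _
    have hr : 2*j < 2*k := by omega
    simp only [scs1A, if_pos hr]
    split_ifs <;> first | ring1 | omega | (exfalso; omega)
  rw [Finset.sum_congr rfl h1, Finset.sum_add_distrib,
    Finset.sum_ite_eq' (range (2*k+nc)) (3*j) (fun c => 2 * y c),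
    Finset.sum_ite_eq' (range (2*k+nc)) (3*j+2) y,
    if_pos (mem_range.mpr (by omega)), if_pos (mem_range.mpr (by omega))]

private lemma scs1_rowpay2 (k nc : ℕ) (K : ℝ) (A : ℕ → ℕ → ℝ) (y : ℕ → ℝ)
    (hknc : k ≤ nc) {j : ℕ} (hj : j < k) :
    ∑ c ∈ range (2*k+nc), scs1A k K A (2*j+1) c * y c = y (3*j+1) + y (3*j+2) := by
  have h1 : ∀ c ∈ range (2*k+nc), scs1A k K A (2*j+1) c * y c
      = (if c = 3*j+1 then y c else 0) + (if c = 3*j+2 then y c else 0) := by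
    intro c _
    have hr : 2*j+1 < 2*k := by omega
    simp only [scs1A, if_pos hr]
    split_ifs <;> first | ring1 | omega | (exfalso; omega)
  rw [Finset.sum_congr rfl h1, Finset.sum_add_distrib,
    Finset.sum_ite_eq' (range (2*k+nc)) (3*j+1) y,
    Finset.sum_ite_eq' (range (2*k+nc)) (3*j+2) y,
    if_pos (mem_range.mpr (by omega)), if_pos (mem_range.mpr (by omega))]

private lemma scs1_aux (n nr nc k : ℕ) (K ε : ℝ) (A B : ℕ → ℕ → ℝ)
    (xstar ystar : ℕ → ℝ)
    (hin : Scs1Input n nr nc k K A B)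
    (hε0 : 0 ≤ ε) (hε : ε < 1 / (3 * (n:ℝ)))
    (hwsne : IsWSNE (2*k+nr) (2*k+nc) (scs1A k K A) (scs1B k B) xstar ystar ε)
    (hk : 0 < k) (c : ℕ) (hc : c < 2*k+nc) (hyc : 0 < ystar c)
    (hpc : ∑ r ∈ range (2*k+nr), xstar r * scs1B k B r c ≤ 0) : False := by
  obtain ⟨hnrn, hncn, hknc, hAbd, hBbd, hArow, hAcol, hBrow, hBcol, hcolK, hnoK⟩ := hin
  obtain ⟨hx0, hxtop, hxsum, hy0, hytop, hysum, hrow, hcol⟩ := hwsne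
  have hn1 : 1 ≤ n := le_trans hk (le_trans hknc hncn)
  have hn0 : (0:ℝ) < 3 * n := by
    have : (1:ℝ) ≤ n := by exact_mod_cast hn1
    linarith
  have hε' : ε * (3 * (n:ℝ)) < 1 := (lt_div_iff₀ hn0).mp hε
  have hA : ∀ c' < 2*k+nc, ∑ r ∈ range (2*k+nr), xstar r * scs1B k B r c' ≤ ε := by
    intro c' hc'
    have := hcol c hc hyc c' hc'
    linarith
  have hgad : ∀ r < 2*k, xstar r ≤ ε := by
    intro r hr
    have hjr : r / 2 < k := by omega
    have h2 : r = 2*(r/2) ∨ r = 2*(r/2)+1 := by omega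
    rcases h2 with h | h
    · have := hA (3*(r/2)+1) (by omega)
      rw [scs1_colpay2 k nr B xstar hjr] at this
      rw [h]; exact this
    · have := hA (3*(r/2)) (by omega)
      rw [scs1_colpay1 k nr B xstar hjr] at this
      rw [h]; exact this
  have hmass : ∑ r ∈ range (2*k), xstar r ≤ 2*k*ε := by
    calc ∑ r ∈ range (2*k), xstar r ≤ ∑ _r ∈ range (2*k), ε :=
          Finset.sum_le_sum (fun r hr => hgad r (mem_range.mp hr))
      _ = 2*k*ε := by
          rw [Finset.sum_const, card_range, nsmul_eq_mul]
          push_cast; ring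
  have hxsplit : ∑ r ∈ range (2*k+nr), xstar r
      = ∑ r ∈ range (2*k), xstar r + ∑ i ∈ range nr, xstar (2*k+i) :=
    scs1_sum_split _ _ _
  have henc : 1 - 2*k*ε ≤ ∑ i ∈ range nr, xstar (2*k+i) := by
    rw [hxsplit] at hxsum; linarith
  have hsmall : ∀ j'' < nc, ∑ i ∈ range nr, xstar (2*k+i) * B i j'' ≤ ε := by
    intro j'' hj''
    rcases lt_or_ge j'' k with h | h
    · have := hA (3*j''+2) (by omega)
      rwa [scs1_colpay3 k nr B xstar h] at this
    · have := hA (2*k+j'') (by omega)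
      rwa [scs1_colpay4 k nr B xstar h] at this
  have hbig : ∑ i ∈ range nr, xstar (2*k+i)
      ≤ ∑ j'' ∈ range nc, ∑ i ∈ range nr, xstar (2*k+i) * B i j'' := by
    rw [Finset.sum_comm]
    apply Finset.sum_le_sum
    intro i hi
    rw [← Finset.mul_sum]
    obtain ⟨j0, hj0, hB1⟩ := hBrow i (mem_range.mp hi)
    have hs : 1 ≤ ∑ j'' ∈ range nc, B i j'' :=
      le_trans hB1 (Finset.single_le_sum
        (fun jj hjj => (hBbd i (mem_range.mp hi) jj (mem_range.mp hjj)).1)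
        (mem_range.mpr hj0))
    nlinarith [hx0 (2*k+i)]
  have hsum_small : ∑ j'' ∈ range nc, ∑ i ∈ range nr, xstar (2*k+i) * B i j''
      ≤ nc * ε := by
    calc ∑ j'' ∈ range nc, ∑ i ∈ range nr, xstar (2*k+i) * B i j''
        ≤ ∑ _j'' ∈ range nc, ε :=
          Finset.sum_le_sum (fun j'' hj'' => hsmall j'' (mem_range.mp hj''))
      _ = nc * ε := by rw [Finset.sum_const, card_range, nsmul_eq_mul]
  have hcast : (nc:ℝ) + 2*k ≤ 3*n := by
    have h1 : (nc:ℝ) ≤ n := by exact_mod_cast hncn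
    have h2 : (k:ℝ) ≤ n := by exact_mod_cast le_trans hknc hncn
    linarith
  have hprod : ((nc:ℝ) + 2*k) * ε ≤ 3*(n:ℝ) * ε :=
    mul_le_mul_of_nonneg_right hcast hε0
  nlinarith

/-- If `0 ≤ ε < 1/(3n)` and `(x*, y*)` is an `ε`-WSNE of `(A', B')`, then for every
column `j < k` of `A` with `P(rbʲ) > 0` we have
`(1/3)·P(cb₁ʲ) - ε ≤ y*_{3j} ≤ (1/3)·P(cb₁ʲ) + ε`. -/
theorem stmt9 (n nr nc k : ℕ) (K ε : ℝ) (A B : ℕ → ℕ → ℝ) (xstar ystar : ℕ → ℝ)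
    (hK4 : 4 ≤ K) (hK8 : K ≤ 8)
    (hin : Scs1Input n nr nc k K A B)
    (hε0 : 0 ≤ ε) (hε : ε < 1 / (3 * (n:ℝ)))
    (hwsne : IsWSNE (2*k+nr) (2*k+nc) (scs1A k K A) (scs1B k B) xstar ystar ε) :
    ∀ j < k, 0 < xstar (2*j) + xstar (2*j+1) →
      (1/3) * (ystar (3*j) + ystar (3*j+1)) - ε ≤ ystar (3*j) ∧
      ystar (3*j) ≤ (1/3) * (ystar (3*j) + ystar (3*j+1)) + ε := by
  obtain ⟨hnrn, hncn, hknc, hAbd, hBbd, hArow, hAcol, hBrow, hBcol, hcolK, hnoK⟩ := hin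
  obtain ⟨hx0, hxtop, hxsum, hy0, hytop, hysum, hrow, hcol⟩ := hwsne
  intro j hj _hpos
  have hin' : Scs1Input n nr nc k K A B :=
    ⟨hnrn, hncn, hknc, hAbd, hBbd, hArow, hAcol, hBrow, hBcol, hcolK, hnoK⟩
  have hwsne' : IsWSNE (2*k+nr) (2*k+nc) (scs1A k K A) (scs1B k B) xstar ystar ε :=
    ⟨hx0, hxtop, hxsum, hy0, hytop, hysum, hrow, hcol⟩
  have hk : 0 < k := by omega
  constructor
  · by_contra hlt
    push_neg at hlt
    -- ystar (3j) < (1/3)(y0+y1) - ε  gives  y1 > 2 y0 + 3 ε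
    have hy1 : ystar (3*j+1) > 2 * ystar (3*j) + 3 * ε := by linarith
    have hy1pos : 0 < ystar (3*j+1) := by
      have := hy0 (3*j)
      linarith
    have hx2j : xstar (2*j) = 0 := by
      by_contra hne
      have hxp : 0 < xstar (2*j) := lt_of_le_of_ne (hx0 (2*j)) (Ne.symm hne)
      have := hrow (2*j) (by omega) hxp (2*j+1) (by omega)
      rw [scs1_rowpay1 k nc K A ystar hknc hj, scs1_rowpay2 k nc K A ystar hknc hj] at this
      linarith
    exact absurd
      (scs1_aux n nr nc k K ε A B xstar ystar hin' hε0 hε hwsne' hk (3*j+1)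
        (by omega) hy1pos
        (by rw [scs1_colpay2 k nr B xstar hj, hx2j]))
      (fun h => h)
  · by_contra hlt
    push_neg at hlt
    have hy0' : 2 * ystar (3*j) > ystar (3*j+1) + 3 * ε := by linarith
    have hy0pos : 0 < ystar (3*j) := by
      have := hy0 (3*j+1)
      linarith
    have hx2j1 : xstar (2*j+1) = 0 := by
      by_contra hne
      have hxp : 0 < xstar (2*j+1) := lt_of_le_of_ne (hx0 (2*j+1)) (Ne.symm hne)
      have := hrow (2*j+1) (by omega) hxp (2*j) (by omega)
      rw [scs1_rowpay1 k nc K A ystar hknc hj, scs1_rowpay2 k nc K A ystar hknc hj] at this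
      linarith
    exact absurd
      (scs1_aux n nr nc k K ε A B xstar ystar hin' hε0 hε hwsne' hk (3*j)
        (by omega) hy0pos
        (by rw [scs1_colpay1 k nr B xstar hj, hx2j1]))
      (fun h => h)
end

section
/- Let (A,B) and (A′,B′) be as in the type-one single column simulation with 4 ≤ K ≤ 8, let 0 ≤ ε < 1/(3n), and let (x*,y*) be an ε-WSNE of (A′,B′). Then for each column j < k of A, if P(rbʲ) > 0 and P(cb₁ʲ) ≥ 11ε, then P(cb₂ʲ) > 0 (i.e., y*_{3j+2} > 0). -/
open Finset
open scoped Classical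

section Helpers

variable {k nr nc : ℕ} {K : ℝ} {A B : ℕ → ℕ → ℝ}

lemma scs1A_2j (k : ℕ) (K : ℝ) (A : ℕ → ℕ → ℝ) {j : ℕ} (hj : j < k) (c : ℕ) :
    scs1A k K A (2*j) c
      = (if c = 3*j then 2 else 0) + (if c = 3*j+2 then 1 else 0) := by
  have h1 : 2*j < 2*k := by omega
  have e1 : 2*j % 2 = 0 := by omega
  have e2 : 2*j / 2 = j := by omega
  simp only [scs1A, if_pos h1, e1, e2]
  split_ifs <;> first | contradiction | omega | norm_num

lemma scs1A_2j1 (k : ℕ) (K : ℝ) (A : ℕ → ℕ → ℝ) {j : ℕ} (hj : j < k) (c : ℕ) :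
    scs1A k K A (2*j+1) c
      = (if c = 3*j+1 then 1 else 0) + (if c = 3*j+2 then 1 else 0) := by
  have h1 : 2*j+1 < 2*k := by omega
  have e1 : (2*j+1) % 2 = 1 := by omega
  have e2 : (2*j+1) / 2 = j := by omega
  simp only [scs1A, if_pos h1, e1, e2]
  split_ifs <;> first | contradiction | omega | norm_num

lemma scs1A_enc (k : ℕ) (K : ℝ) (A : ℕ → ℕ → ℝ) {j i0 : ℕ} (hj : j < k)
    (hi : A i0 j = K) : scs1A k K A (2*k+i0) (3*j+1) = K/2 := by
  have h1 : ¬ (2*k+i0 < 2*k) := by omega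
  have h2 : 3*j+1 < 3*k := by omega
  have e0 : ¬ ((3*j+1) % 3 = 0) := by omega
  have e1 : (3*j+1) % 3 = 1 := by omega
  have e2 : (3*j+1) / 3 = j := by omega
  have e3 : 2*k+i0 - 2*k = i0 := by omega
  simp only [scs1A, if_neg h1, if_pos h2, if_neg e0, if_pos e1, e2, e3, if_pos hi]

lemma scs1B_col3j (k : ℕ) (B : ℕ → ℕ → ℝ) {j : ℕ} (hj : j < k) (r : ℕ) :
    scs1B k B r (3*j) = if r = 2*j+1 then 1 else 0 := by
  simp only [scs1B]
  split_ifs <;> first | contradiction | rfl | omega | (exfalso; omega) | norm_num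

lemma scs1A_nonneg (hK : 4 ≤ K) (hA0 : ∀ i < nr, ∀ j < nc, 0 ≤ A i j) (hk : k ≤ nc) :
    ∀ r < 2*k+nr, ∀ c < 2*k+nc, 0 ≤ scs1A k K A r c := by
  intro r hr c hc
  simp only [scs1A]
  split_ifs <;> first
    | (refine hA0 _ ?_ _ ?_ <;> omega)
    | linarith
    | norm_num

lemma scs1B_nonneg (hB0 : ∀ i < nr, ∀ j < nc, 0 ≤ B i j) (hk : k ≤ nc) :
    ∀ r < 2*k+nr, ∀ c < 2*k+nc, 0 ≤ scs1B k B r c := by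
  intro r hr c hc
  simp only [scs1B]
  split_ifs <;> first
    | (refine hB0 _ ?_ _ ?_ <;> omega)
    | norm_num

end Helpers
section Helpers2

variable {k nr nc : ℕ} {K : ℝ} {A B : ℕ → ℕ → ℝ}

lemma scs1A_colsum (hK : 4 ≤ K) (hA0 : ∀ i < nr, ∀ j < nc, 0 ≤ A i j)
    (hAcol : ∀ j < nc, ∃ i < nr, 1 ≤ A i j) (hk : k ≤ nc) :
    ∀ c < 2*k+nc, 1 ≤ ∑ r ∈ Finset.range (2*k+nr), scs1A k K A r c := by
  intro c hc
  have hwit : ∃ r < 2*k+nr, 1 ≤ scs1A k K A r c := by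
    by_cases hc3 : c < 3*k
    · have h3 : c % 3 = 0 ∨ c % 3 = 1 ∨ c % 3 = 2 := by omega
      rcases h3 with h3 | h3 | h3
      · refine ⟨2*(c/3), by omega, ?_⟩
        rw [scs1A_2j k K A (show c/3 < k by omega) c]
        split_ifs <;> first | (exfalso; omega) | norm_num
      · refine ⟨2*(c/3)+1, by omega, ?_⟩
        rw [scs1A_2j1 k K A (show c/3 < k by omega) c]
        split_ifs <;> first | (exfalso; omega) | norm_num
      · refine ⟨2*(c/3), by omega, ?_⟩
        rw [scs1A_2j k K A (show c/3 < k by omega) c]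
        split_ifs <;> first | (exfalso; omega) | norm_num
    · obtain ⟨i, hi, h1⟩ := hAcol (c - 2*k) (by omega)
      refine ⟨2*k+i, by omega, ?_⟩
      have e : 2*k+i - 2*k = i := by omega
      simp only [scs1A, if_neg (show ¬ (2*k+i < 2*k) by omega), if_neg hc3, e]
      exact h1
  obtain ⟨r0, hr0, h1⟩ := hwit
  exact h1.trans (Finset.single_le_sum
    (fun r hr => scs1A_nonneg hK hA0 hk r (Finset.mem_range.mp hr) c hc)
    (Finset.mem_range.mpr hr0))

lemma scs1B_rowsum (hB0 : ∀ i < nr, ∀ j < nc, 0 ≤ B i j)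
    (hBrow : ∀ i < nr, ∃ j < nc, 1 ≤ B i j) (hk : k ≤ nc) :
    ∀ r < 2*k+nr, 1 ≤ ∑ c ∈ Finset.range (2*k+nc), scs1B k B r c := by
  intro r hr
  have hwit : ∃ c < 2*k+nc, 1 ≤ scs1B k B r c := by
    by_cases hr2 : r < 2*k
    · by_cases hm : r % 2 = 0
      · refine ⟨3*(r/2)+1, by omega, ?_⟩
        simp only [scs1B, if_pos hr2]
        split_ifs <;> first | (exfalso; omega) | norm_num
      · refine ⟨3*(r/2), by omega, ?_⟩
        simp only [scs1B, if_pos hr2]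
        split_ifs <;> first | (exfalso; omega) | norm_num
    · obtain ⟨j', hj', h1⟩ := hBrow (r - 2*k) (by omega)
      by_cases hjk' : j' < k
      · refine ⟨3*j'+2, by omega, ?_⟩
        have e : (3*j'+2)/3 = j' := by omega
        simp only [scs1B, if_neg hr2, if_pos (show 3*j'+2 < 3*k by omega),
          if_pos (show (3*j'+2) % 3 = 2 by omega), e]
        exact h1
      · refine ⟨2*k+j', by omega, ?_⟩
        have e : 2*k+j' - 2*k = j' := by omega
        simp only [scs1B, if_neg hr2, if_neg (show ¬ (2*k+j' < 3*k) by omega), e]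
        exact h1
  obtain ⟨c0, hc0, h1⟩ := hwit
  exact h1.trans (Finset.single_le_sum
    (fun c hc => scs1B_nonneg hB0 hk r hr c (Finset.mem_range.mp hc))
    (Finset.mem_range.mpr hc0))

lemma exists_big {n : ℕ} (m : ℕ) (f : ℕ → ℝ) (hm : (m:ℝ) ≤ 3*(n:ℝ)) (hn : 0 < (n:ℝ))
    (hsum : 1 ≤ ∑ i ∈ Finset.range m, f i) : ∃ i < m, 1/(3*(n:ℝ)) ≤ f i := by
  by_contra h
  push_neg at h
  have hm0 : m ≠ 0 := by
    rintro rfl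
    simp at hsum
    linarith
  have hlt := Finset.sum_lt_sum_of_nonempty (Finset.nonempty_range_iff.mpr hm0)
    (fun i hi => h i (Finset.mem_range.mp hi))
  rw [Finset.sum_const, Finset.card_range, nsmul_eq_mul] at hlt
  have h3n : (0:ℝ) < 3*(n:ℝ) := by linarith
  have hle : (m:ℝ) * (1/(3*(n:ℝ))) ≤ 1 := by
    rw [mul_one_div, div_le_one h3n]
    linarith
  linarith

end Helpers2
/-- If `4 ≤ K ≤ 8`, `0 ≤ ε < 1/(3n)` and `(x*, y*)` is an `ε`-WSNE of `(A', B')`,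
then for every column `j < k` of `A`: if `P(rbʲ) > 0` and `P(cb₁ʲ) ≥ 11ε`, then
`P(cb₂ʲ) > 0`, i.e. `y*_{3j+2} > 0`. -/
theorem stmt10 (n nr nc k : ℕ) (K ε : ℝ) (A B : ℕ → ℕ → ℝ) (xstar ystar : ℕ → ℝ)
    (hK4 : 4 ≤ K) (hK8 : K ≤ 8)
    (hin : Scs1Input n nr nc k K A B)
    (hε0 : 0 ≤ ε) (hε : ε < 1 / (3 * (n:ℝ)))
    (hwsne : IsWSNE (2*k+nr) (2*k+nc) (scs1A k K A) (scs1B k B) xstar ystar ε) :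
    ∀ j < k, 0 < xstar (2*j) + xstar (2*j+1) →
      11 * ε ≤ ystar (3*j) + ystar (3*j+1) → 0 < ystar (3*j+2) := by
  obtain ⟨hnr, hnc, hknc, hAb, hBb, hArow, hAcol, hBrow, hBcol, hKcol, hnoK⟩ := hin
  obtain ⟨hx0, hxz, hx1, hy0, hyz, hy1, hrow, hcol⟩ := hwsne
  have hA0 : ∀ i < nr, ∀ j < nc, 0 ≤ A i j := fun i hi j hj => (hAb i hi j hj).1
  have hB0 : ∀ i < nr, ∀ j < nc, 0 ≤ B i j := fun i hi j hj => (hBb i hi j hj).1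
  intro j hjk hxpos hysum
  by_contra hcon
  push_neg at hcon
  have hy2 : ystar (3*j+2) = 0 := le_antisymm hcon (hy0 _)
  -- positivity of n and 1/(3n)
  have hn : 0 < (n:ℝ) := by
    rcases Nat.eq_zero_or_pos n with h | h
    · exfalso
      rw [h] at hε
      norm_num at hε
      linarith
    · exact_mod_cast h
  have hn3 : 0 < 1/(3*(n:ℝ)) := one_div_pos.mpr (by linarith)
  -- the row i0 with A i0 j = K
  have hfil := (hKcol j hjk).1
  have hne : ((Finset.range nr).filter fun i => A i j = K).Nonempty :=
    Finset.card_pos.mp (by rw [hfil]; norm_num)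
  obtain ⟨i0, hi0⟩ := hne
  rw [Finset.mem_filter, Finset.mem_range] at hi0
  obtain ⟨hi0nr, hi0K⟩ := hi0
  -- exact payoffs of rows 2j, 2j+1 and column 3j
  have hr2j : ∑ c ∈ range (2*k+nc), scs1A k K A (2*j) c * ystar c
      = 2 * ystar (3*j) + ystar (3*j+2) := by
    refine Eq.trans (Finset.sum_congr rfl fun c _ => by
      rw [scs1A_2j k K A hjk c, add_mul, ite_mul, ite_mul, zero_mul, one_mul]) ?_
    rw [Finset.sum_add_distrib, Finset.sum_ite_eq', Finset.sum_ite_eq',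
      if_pos (Finset.mem_range.mpr (show 3*j < 2*k+nc by omega)),
      if_pos (Finset.mem_range.mpr (show 3*j+2 < 2*k+nc by omega))]
  have hr2j1 : ∑ c ∈ range (2*k+nc), scs1A k K A (2*j+1) c * ystar c
      = ystar (3*j+1) + ystar (3*j+2) := by
    refine Eq.trans (Finset.sum_congr rfl fun c _ => by
      rw [scs1A_2j1 k K A hjk c, add_mul, ite_mul, ite_mul, zero_mul, one_mul]) ?_
    rw [Finset.sum_add_distrib, Finset.sum_ite_eq', Finset.sum_ite_eq',
      if_pos (Finset.mem_range.mpr (show 3*j+1 < 2*k+nc by omega)),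
      if_pos (Finset.mem_range.mpr (show 3*j+2 < 2*k+nc by omega))]
  have hc3j : ∑ r ∈ range (2*k+nr), xstar r * scs1B k B r (3*j) = xstar (2*j+1) := by
    refine Eq.trans (Finset.sum_congr rfl fun r _ => by
      rw [scs1B_col3j k B hjk r, mul_ite, mul_one, mul_zero]) ?_
    rw [Finset.sum_ite_eq', if_pos (Finset.mem_range.mpr (show 2*j+1 < 2*k+nr by omega))]
  -- lower bound for the payoff of encoding row i0
  have hrK : K/2 * ystar (3*j+1) ≤ ∑ c ∈ range (2*k+nc), scs1A k K A (2*k+i0) c * ystar c := by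
    have hs : scs1A k K A (2*k+i0) (3*j+1) * ystar (3*j+1)
        ≤ ∑ c ∈ range (2*k+nc), scs1A k K A (2*k+i0) c * ystar c :=
      Finset.single_le_sum (f := fun c => scs1A k K A (2*k+i0) c * ystar c)
      (fun c hc => mul_nonneg
        (scs1A_nonneg hK4 hA0 hknc (2*k+i0) (by omega) c (Finset.mem_range.mp hc))
        (hy0 c))
      (Finset.mem_range.mpr (show 3*j+1 < 2*k+nc by omega))
    rwa [scs1A_enc k K A hjk hi0K] at hs
  -- some row has payoff at least 1/(3n)
  have hmR : ((2*k+nr : ℕ):ℝ) ≤ 3*(n:ℝ) := by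
    have h : (2*k+nr:ℕ) ≤ 3*n := by omega
    calc ((2*k+nr:ℕ):ℝ) ≤ ((3*n:ℕ):ℝ) := Nat.cast_le.mpr h
    _ = 3*(n:ℝ) := by push_cast; ring
  have hmC : ((2*k+nc : ℕ):ℝ) ≤ 3*(n:ℝ) := by
    have h : (2*k+nc:ℕ) ≤ 3*n := by omega
    calc ((2*k+nc:ℕ):ℝ) ≤ ((3*n:ℕ):ℝ) := Nat.cast_le.mpr h
    _ = 3*(n:ℝ) := by push_cast; ring
  have hsumR : 1 ≤ ∑ r ∈ range (2*k+nr), ∑ c ∈ range (2*k+nc), scs1A k K A r c * ystar c := by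
    rw [Finset.sum_comm]
    calc (1:ℝ) = ∑ c ∈ range (2*k+nc), ystar c := hy1.symm
    _ ≤ ∑ c ∈ range (2*k+nc), (∑ r ∈ range (2*k+nr), scs1A k K A r c) * ystar c := by
        refine Finset.sum_le_sum fun c hc => ?_
        calc ystar c = 1 * ystar c := (one_mul _).symm
        _ ≤ _ := mul_le_mul_of_nonneg_right
            (scs1A_colsum hK4 hA0 hAcol hknc c (Finset.mem_range.mp hc)) (hy0 c)
    _ = _ := by simp only [Finset.sum_mul]
  obtain ⟨rstar, hrstar, hrbig0⟩ :=
    exists_big (n := n) (2*k+nr) (fun r => ∑ c ∈ range (2*k+nc), scs1A k K A r c * ystar c)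
      hmR hn hsumR
  have hrbig : 1/(3*(n:ℝ)) ≤ ∑ c ∈ range (2*k+nc), scs1A k K A rstar c * ystar c := hrbig0
  -- some column has payoff at least 1/(3n)
  have hsumC : 1 ≤ ∑ c ∈ range (2*k+nc), ∑ r ∈ range (2*k+nr), xstar r * scs1B k B r c := by
    rw [Finset.sum_comm]
    calc (1:ℝ) = ∑ r ∈ range (2*k+nr), xstar r := hx1.symm
    _ ≤ ∑ r ∈ range (2*k+nr), xstar r * (∑ c ∈ range (2*k+nc), scs1B k B r c) := by
        refine Finset.sum_le_sum fun r hr => ?_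
        calc xstar r = xstar r * 1 := (mul_one _).symm
        _ ≤ _ := mul_le_mul_of_nonneg_left
            (scs1B_rowsum hB0 hBrow hknc r (Finset.mem_range.mp hr)) (hx0 r)
    _ = _ := by simp only [Finset.mul_sum]
  obtain ⟨cstar, hcstar, hcbig0⟩ :=
    exists_big (n := n) (2*k+nc) (fun c => ∑ r ∈ range (2*k+nr), xstar r * scs1B k B r c)
      hmC hn hsumC
  have hcbig : 1/(3*(n:ℝ)) ≤ ∑ r ∈ range (2*k+nr), xstar r * scs1B k B r cstar := hcbig0
  -- case analysis
  by_cases hx1pos : 0 < xstar (2*j+1)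
  · have ha := hrow (2*j+1) (by omega) hx1pos (2*k+i0) (by omega)
    rw [hr2j1] at ha
    have hyb : ystar (3*j+1) ≤ ε := by
      nlinarith [hy0 (3*j+1), mul_nonneg (show (0:ℝ) ≤ K - 4 by linarith) (hy0 (3*j+1))]
    have hb := hrow (2*j+1) (by omega) hx1pos (2*j) (by omega)
    rw [hr2j1, hr2j] at hb
    have hy3jb : ystar (3*j) ≤ ε := by linarith
    have hez : ε = 0 := le_antisymm (by linarith) hε0
    have hcc := hrow (2*j+1) (by omega) hx1pos rstar hrstar
    rw [hr2j1] at hcc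
    linarith
  · have hx1z : xstar (2*j+1) = 0 := le_antisymm (not_lt.mp hx1pos) (hx0 _)
    have hx2j : 0 < xstar (2*j) := by linarith
    have ha := hrow (2*j) (by omega) hx2j (2*k+i0) (by omega)
    rw [hr2j] at ha
    have ha' : ystar (3*j+1) ≤ ystar (3*j) + ε/2 := by
      nlinarith [hy0 (3*j+1), mul_nonneg (show (0:ℝ) ≤ K - 4 by linarith) (hy0 (3*j+1))]
    have hb := hrow (2*j) (by omega) hx2j rstar hrstar
    rw [hr2j] at hb
    have hy3jpos : 0 < ystar (3*j) := by linarith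
    have hcc := hcol (3*j) (by omega) hy3jpos cstar hcstar
    rw [hc3j] at hcc
    linarith
end

section
/- Let (A,B) and (A′,B′) be as in the type-one single column simulation with 4 ≤ K ≤ 8, let 0 ≤ ε < 1/(11n), let (x*,y*) be an ε-WSNE of (A′,B′), and assume the renormalizations defining the translated profile (x,y) are valid (the vectors x′ and y′ have positive sums). Then |xᵀ·B_j − xᵀ·B_{j′}| ≤ 48·n·ε for all columns j, j′ of B with y_j > 0 and y_{j′} > 0. -/
open Finset
open scoped Classical

/- ======================= auxiliary lemmas ======================= -/

lemma mySum_range_add (m n : ℕ) (f : ℕ → ℝ) :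
    ∑ i ∈ range (m+n), f i = ∑ i ∈ range m, f i + ∑ i ∈ range n, f (m+i) := by
  induction n with
  | zero => simp
  | succ n ih => rw [← Nat.add_assoc, sum_range_succ, ih, sum_range_succ, add_assoc]

lemma mySum_range_two_mul (k : ℕ) (f : ℕ → ℝ) :
    ∑ r ∈ range (2*k), f r = ∑ j ∈ range k, (f (2*j) + f (2*j+1)) := by
  induction k with
  | zero => simp
  | succ k ih =>
      have : 2*(k+1) = (2*k) + 1 + 1 := by ring
      rw [this, sum_range_succ, sum_range_succ, ih, sum_range_succ, add_assoc]

lemma myExists_mul_ge_sum (m : ℕ) (f : ℕ → ℝ) (hm : 0 < m) :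
    ∃ i ∈ range m, ∑ x ∈ range m, f x ≤ (m:ℝ) * f i := by
  by_contra hcon
  push_neg at hcon
  have h2 : ∑ i ∈ range m, (m:ℝ) * f i < ∑ _i ∈ range m, (∑ x ∈ range m, f x) :=
    sum_lt_sum_of_nonempty (nonempty_range_iff.mpr (by omega)) (fun i hi => hcon i hi)
  rw [← mul_sum, sum_const, card_range, nsmul_eq_mul] at h2
  exact lt_irrefl _ h2

lemma colB_pay (k nr : ℕ) (B : ℕ → ℕ → ℝ) (x : ℕ → ℝ) (j : ℕ) :
    ∑ r ∈ range (2*k+nr), x r * scs1B k B r (if j < k then 3*j+2 else 2*k+j)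
      = ∑ i ∈ range nr, x (2*k+i) * B i j := by
  rw [mySum_range_add]
  have h1 : ∑ r ∈ range (2*k), x r * scs1B k B r (if j < k then 3*j+2 else 2*k+j) = 0 := by
    apply sum_eq_zero
    intro r hr
    rw [mem_range] at hr
    have hB : scs1B k B r (if j < k then 3*j+2 else 2*k+j) = 0 := by
      simp only [scs1B, if_pos hr]
      by_cases hjk : j < k
      · rw [if_pos hjk, if_neg (by omega), if_neg (by omega)]
      · rw [if_neg hjk, if_neg (by omega), if_neg (by omega)]
    rw [hB, mul_zero]
  rw [h1, zero_add]
  apply sum_congr rfl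
  intro i hi
  rw [mem_range] at hi
  congr 1
  by_cases hjk : j < k
  · simp only [scs1B, if_pos hjk, if_neg (show ¬ 2*k+i < 2*k by omega)]
    rw [if_pos (by omega), if_pos (by omega)]
    congr 1 <;> omega
  · simp only [scs1B, if_pos hjk, if_neg hjk, if_neg (show ¬ 2*k+i < 2*k by omega)]
    rw [if_neg (by omega)]
    congr 1 <;> omega

lemma colB_T0 (k nr : ℕ) (B : ℕ → ℕ → ℝ) (x : ℕ → ℝ) (j : ℕ) (hj : j < k) :
    ∑ r ∈ range (2*k+nr), x r * scs1B k B r (3*j) = x (2*j+1) := by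
  have hpt : ∀ r, x r * scs1B k B r (3*j) = if r = 2*j+1 then x (2*j+1) else 0 := by
    intro r
    by_cases hr : r = 2*j+1
    · subst hr
      simp only [scs1B, if_pos (show 2*j+1 < 2*k by omega)]
      rw [if_pos (by omega), if_neg (by omega)]
      simp
    · rw [if_neg hr]
      have : scs1B k B r (3*j) = 0 := by
        simp only [scs1B]
        by_cases h2 : r < 2*k
        · rw [if_pos h2]
          by_cases h3 : 3*j = 3*(r/2)
          · rw [if_pos h3, if_pos (by omega)]
          · rw [if_neg h3, if_neg (by omega)]
        · rw [if_neg h2, if_pos (by omega), if_neg (by omega)]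
      rw [this, mul_zero]
  simp only [hpt]
  rw [sum_ite_eq' (range (2*k+nr))]
  rw [if_pos (mem_range.mpr (by omega))]

lemma colB_T1 (k nr : ℕ) (B : ℕ → ℕ → ℝ) (x : ℕ → ℝ) (j : ℕ) (hj : j < k) :
    ∑ r ∈ range (2*k+nr), x r * scs1B k B r (3*j+1) = x (2*j) := by
  have hpt : ∀ r, x r * scs1B k B r (3*j+1) = if r = 2*j then x (2*j) else 0 := by
    intro r
    by_cases hr : r = 2*j
    · subst hr
      simp only [scs1B, if_pos (show 2*j < 2*k by omega)]
      rw [if_neg (by omega), if_pos (by omega), if_pos (by omega)]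
      simp
    · rw [if_neg hr]
      have : scs1B k B r (3*j+1) = 0 := by
        simp only [scs1B]
        by_cases h2 : r < 2*k
        · rw [if_pos h2, if_neg (by omega)]
          by_cases h3 : 3*j+1 = 3*(r/2)+1
          · rw [if_pos h3, if_neg (by omega)]
          · rw [if_neg h3]
        · rw [if_neg h2, if_pos (by omega), if_neg (by omega)]
      rw [this, mul_zero]
  simp only [hpt]
  rw [sum_ite_eq' (range (2*k+nr))]
  rw [if_pos (mem_range.mpr (by omega))]

lemma rowA_0 (k nc : ℕ) (K : ℝ) (A : ℕ → ℕ → ℝ) (y : ℕ → ℝ) (j : ℕ)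
    (hj : j < k) (hk : k ≤ nc) :
    ∑ c ∈ range (2*k+nc), scs1A k K A (2*j) c * y c = 2 * y (3*j) + y (3*j+2) := by
  have hpt : ∀ c, scs1A k K A (2*j) c * y c
      = (if c = 3*j then 2 * y (3*j) else 0) + (if c = 3*j+2 then y (3*j+2) else 0) := by
    intro c
    simp only [scs1A, if_pos (show 2*j < 2*k by omega)]
    have hd : (2*j)/2 = j := by omega
    have hm : (2*j) % 2 = 0 := by omega
    rw [hd, hm]
    split_ifs <;> first | exact False.elim (by assumption) | (exfalso; omega) | (subst_vars; ring)
  simp only [hpt]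
  rw [sum_add_distrib, sum_ite_eq' (range (2*k+nc)), sum_ite_eq' (range (2*k+nc)),
    if_pos (mem_range.mpr (by omega)), if_pos (mem_range.mpr (by omega))]

lemma rowA_1 (k nc : ℕ) (K : ℝ) (A : ℕ → ℕ → ℝ) (y : ℕ → ℝ) (j : ℕ)
    (hj : j < k) (hk : k ≤ nc) :
    ∑ c ∈ range (2*k+nc), scs1A k K A (2*j+1) c * y c = y (3*j+1) + y (3*j+2) := by
  have hpt : ∀ c, scs1A k K A (2*j+1) c * y c
      = (if c = 3*j+1 then y (3*j+1) else 0) + (if c = 3*j+2 then y (3*j+2) else 0) := by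
    intro c
    simp only [scs1A, if_pos (show 2*j+1 < 2*k by omega)]
    have hd : (2*j+1)/2 = j := by omega
    have hm : (2*j+1) % 2 = 1 := by omega
    rw [hd, hm]
    split_ifs <;> first | exact False.elim (by assumption) | (exfalso; omega) | (subst_vars; ring)
  simp only [hpt]
  rw [sum_add_distrib, sum_ite_eq' (range (2*k+nc)), sum_ite_eq' (range (2*k+nc)),
    if_pos (mem_range.mpr (by omega)), if_pos (mem_range.mpr (by omega))]

lemma scs1A_enc_nonneg (k nc nr : ℕ) (K : ℝ) (A : ℕ → ℕ → ℝ) (i c : ℕ)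
    (hi : i < nr) (hc : c < 2*k+nc) (hK : 0 ≤ K)
    (hA : ∀ i < nr, ∀ j < nc, 0 ≤ A i j) :
    0 ≤ scs1A k K A (2*k+i) c := by
  simp only [scs1A, if_neg (show ¬ 2*k+i < 2*k by omega)]
  have hsub : 2*k+i - 2*k = i := by omega
  rw [hsub]
  by_cases h3 : c < 3*k
  · rw [if_pos h3]
    by_cases h0 : c % 3 = 0
    · rw [if_pos h0]
      split_ifs <;> norm_num
    · rw [if_neg h0]
      by_cases h1 : c % 3 = 1
      · rw [if_pos h1]
        split_ifs <;> [linarith; norm_num; norm_num]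
      · rw [if_neg h1]
  · rw [if_neg h3]
    exact hA i hi (c - 2*k) (by omega)

lemma rowA_enc_ge (k nc nr : ℕ) (K : ℝ) (A : ℕ → ℕ → ℝ) (y : ℕ → ℝ) (i j : ℕ)
    (hi : i < nr) (hj : j < k) (hk : k ≤ nc) (hAij : A i j = K) (hK : 0 ≤ K)
    (hA : ∀ i < nr, ∀ j < nc, 0 ≤ A i j) (hy : ∀ c, 0 ≤ y c) :
    K/2 * y (3*j+1) ≤ ∑ c ∈ range (2*k+nc), scs1A k K A (2*k+i) c * y c := by
  have hmem : 3*j+1 ∈ range (2*k+nc) := mem_range.mpr (by omega)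
  have hval : scs1A k K A (2*k+i) (3*j+1) = K/2 := by
    simp only [scs1A, if_neg (show ¬ 2*k+i < 2*k by omega)]
    rw [if_pos (by omega), if_neg (by omega), if_pos (by omega)]
    have : (3*j+1)/3 = j := by omega
    rw [this, (show 2*k+i - 2*k = i by omega), if_pos hAij]
  calc K/2 * y (3*j+1) = scs1A k K A (2*k+i) (3*j+1) * y (3*j+1) := by rw [hval]
    _ ≤ ∑ c ∈ range (2*k+nc), scs1A k K A (2*k+i) c * y c := by
        apply single_le_sum (f := fun c => scs1A k K A (2*k+i) c * y c) _ hmem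
        intro c hcm
        exact mul_nonneg (scs1A_enc_nonneg k nc nr K A i c hi (mem_range.mp hcm) hK hA) (hy c)

set_option maxHeartbeats 1600000 in
/-- If `4 ≤ K ≤ 8`, `0 ≤ ε < 1/(11n)`, `(x*, y*)` is an `ε`-WSNE of `(A', B')` and
the renormalizations defining the translated profile `(x, y)` are valid, then
`|xᵀ·B_j − xᵀ·B_{j'}| ≤ 48·n·ε` for all columns `j, j'` of `B` with `y_j > 0`
and `y_{j'} > 0`. -/
theorem stmt12 (n nr nc k : ℕ) (K ε : ℝ) (A B : ℕ → ℕ → ℝ) (xstar ystar : ℕ → ℝ)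
    (hK4 : 4 ≤ K) (hK8 : K ≤ 8)
    (hin : Scs1Input n nr nc k K A B)
    (hε0 : 0 ≤ ε) (hε : ε < 1 / (11 * (n:ℝ)))
    (hwsne : IsWSNE (2*k+nr) (2*k+nc) (scs1A k K A) (scs1B k B) xstar ystar ε)
    (hxval : 0 < ∑ i ∈ range nr, xstar (2*k+i))
    (hyval : 0 < ∑ j ∈ range nc, scs1Y k ε ystar j) :
    ∀ j < nc, ∀ j' < nc,
      0 < scs1Y k ε ystar j / ∑ j'' ∈ range nc, scs1Y k ε ystar j'' →
      0 < scs1Y k ε ystar j' / ∑ j'' ∈ range nc, scs1Y k ε ystar j'' →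
      |(∑ i ∈ range nr, (xstar (2*k+i) / ∑ i' ∈ range nr, xstar (2*k+i')) * B i j) -
       (∑ i ∈ range nr, (xstar (2*k+i) / ∑ i' ∈ range nr, xstar (2*k+i')) * B i j')| ≤
        48 * (n:ℝ) * ε := by
  obtain ⟨hnrn, hncn, hknc, hA, hB, hArow, hAcol, hBrow, hBcol, hKcol, hnoK⟩ := hin
  obtain ⟨hx0, hxhi, hxsum, hy0, hyhi, hysum, hrow, hcol⟩ := hwsne
  intro j hj j' hj' hyj hyj'
  have hnr1 : 0 < nr := by
    by_contra h
    have h0 : nr = 0 := by omega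
    rw [h0] at hxval; simp at hxval
  set X : ℝ := ∑ i' ∈ range nr, xstar (2*k+i') with hXdef
  have hX0 : 0 < X := hxval
  clear_value X
  have hn1 : 1 ≤ n := le_trans hnr1 hnrn
  have hnR1 : (1:ℝ) ≤ (n:ℝ) := by exact_mod_cast hn1
  have hnR0 : (0:ℝ) < (n:ℝ) := by linarith
  have hnrR : (nr:ℝ) ≤ (n:ℝ) := by exact_mod_cast hnrn
  have hkR : (k:ℝ) ≤ (n:ℝ) := by exact_mod_cast le_trans hknc hncn
  have h11 : 11 * (n:ℝ) * ε < 1 := by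
    have := (lt_div_iff₀ (show (0:ℝ) < 11 * (n:ℝ) by linarith)).mp hε
    linarith
  -- the payoff of translated column jj
  have hcIdxlt : ∀ jj < nc, (if jj < k then 3*jj+2 else 2*k+jj) < 2*k+nc := by
    intro jj h; split_ifs with h2 <;> omega
  -- gadget mass equation
  have hgad : ∑ jj ∈ range k, (xstar (2*jj) + xstar (2*jj+1)) = 1 - X := by
    have h1 := hxsum
    rw [mySum_range_add, ← hXdef] at h1
    rw [← mySum_range_two_mul]
    linarith
  -- upper bound on translated payoffs
  have hPub : ∀ jj < nc, ∑ i ∈ range nr, xstar (2*k+i) * B i jj ≤ 8 * X := by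
    intro jj hjjnc
    have h1 : ∑ i ∈ range nr, xstar (2*k+i) * B i jj ≤ ∑ i ∈ range nr, xstar (2*k+i) * 8 := by
      apply sum_le_sum
      intro i hi
      exact mul_le_mul_of_nonneg_left (le_trans (hB i (mem_range.mp hi) jj hjjnc).2 hK8) (hx0 _)
    rw [← sum_mul] at h1
    rw [hXdef]; linarith
  -- existence of a column with payoff at least 1/(4n)
  have hMB : ∃ c'' < 2*k+nc,
      1 ≤ 4 * (n:ℝ) * ∑ r ∈ range (2*k+nr), xstar r * scs1B k B r c'' := by
    by_cases hXbig : (1:ℝ)/2 ≤ X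
    · obtain ⟨i, him, hxi⟩ := myExists_mul_ge_sum nr (fun i => xstar (2*k+i)) hnr1
      rw [← hXdef] at hxi
      have hi := mem_range.mp him
      obtain ⟨j'', hj''nc, hBij⟩ := hBrow i hi
      refine ⟨if j'' < k then 3*j''+2 else 2*k+j'', hcIdxlt j'' hj''nc, ?_⟩
      rw [colB_pay]
      have hterm : xstar (2*k+i) ≤ xstar (2*k+i) * B i j'' := by
        have := mul_le_mul_of_nonneg_left hBij (hx0 (2*k+i))
        linarith
      have hsingle : xstar (2*k+i) * B i j'' ≤ ∑ i' ∈ range nr, xstar (2*k+i') * B i' j'' := by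
        apply single_le_sum (f := fun i' => xstar (2*k+i') * B i' j'') _ him
        intro i' hi'
        exact mul_nonneg (hx0 _) (hB i' (mem_range.mp hi') j'' hj''nc).1
      have hnx : (nr:ℝ) * xstar (2*k+i) ≤ (n:ℝ) * xstar (2*k+i) :=
        mul_le_mul_of_nonneg_right hnrR (hx0 _)
      have hfin : 4*(n:ℝ) * xstar (2*k+i) ≤ 4*(n:ℝ) * ∑ i' ∈ range nr, xstar (2*k+i') * B i' j'' :=
        mul_le_mul_of_nonneg_left (le_trans hterm hsingle) (by linarith)
      linarith
    · push_neg at hXbig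
      have hk1 : 0 < k := by
        by_contra h
        have hk0 : k = 0 := by omega
        rw [hk0] at hgad; simp at hgad
        linarith
      obtain ⟨jj, hjm, hjv⟩ := myExists_mul_ge_sum k (fun jj => xstar (2*jj) + xstar (2*jj+1)) hk1
      rw [hgad] at hjv
      have hjk := mem_range.mp hjm
      have hkuv : (k:ℝ) * (xstar (2*jj) + xstar (2*jj+1)) ≤
          (n:ℝ) * (xstar (2*jj) + xstar (2*jj+1)) :=
        mul_le_mul_of_nonneg_right hkR (by have := hx0 (2*jj); have := hx0 (2*jj+1); linarith)
      by_cases huv : xstar (2*jj) ≤ xstar (2*jj+1)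
      · refine ⟨3*jj, by omega, ?_⟩
        rw [colB_T0 k nr B xstar jj hjk]
        have h1 : (n:ℝ) * (xstar (2*jj) + xstar (2*jj+1)) ≤ (n:ℝ) * (2 * xstar (2*jj+1)) :=
          mul_le_mul_of_nonneg_left (by linarith) (by linarith)
        linarith
      · refine ⟨3*jj+1, by omega, ?_⟩
        rw [colB_T1 k nr B xstar jj hjk]
        have h1 : (n:ℝ) * (xstar (2*jj) + xstar (2*jj+1)) ≤ (n:ℝ) * (2 * xstar (2*jj)) :=
          mul_le_mul_of_nonneg_left (by linarith) (by linarith)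
        linarith
  -- supported translated columns have a supported B'-column with the same payoff
  have hsupp : ∀ jj < nc, 0 < scs1Y k ε ystar jj →
      0 < ystar (if jj < k then 3*jj+2 else 2*k+jj) := by
    intro jj hjjnc hpos
    by_cases hjk : jj < k
    · rw [if_pos hjk]
      have hY : scs1Y k ε ystar jj
          = if 11*ε ≤ ystar (3*jj) + ystar (3*jj+1) then ystar (3*jj) else 0 := by
        simp [scs1Y, hjk]
      rw [hY] at hpos
      by_cases hth : 11*ε ≤ ystar (3*jj) + ystar (3*jj+1)
      swap
      · rw [if_neg hth] at hpos; exact absurd hpos (lt_irrefl 0)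
      rw [if_pos hth] at hpos
      -- x*_{2jj+1} > 0
      obtain ⟨c'', hc''lt, hc''⟩ := hMB
      have hv := hcol (3*jj) (by omega) hpos c'' hc''lt
      rw [colB_T0 k nr B xstar jj hjk] at hv
      have hvpos : 0 < xstar (2*jj+1) := by
        by_contra hcontra
        push_neg at hcontra
        have h1 : 4*(n:ℝ) * (∑ r ∈ range (2*k+nr), xstar r * scs1B k B r c'' - ε)
            ≤ 4*(n:ℝ) * xstar (2*jj+1) := by
          apply mul_le_mul_of_nonneg_left _ (by linarith)
          linarith [hv]
        have h2 : 4*(n:ℝ) * xstar (2*jj+1) ≤ 0 := by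
          have := mul_le_mul_of_nonneg_left hcontra (show (0:ℝ) ≤ 4*(n:ℝ) by linarith)
          linarith
        linarith
      -- row conditions
      have hr1 := hrow (2*jj+1) (by omega) hvpos (2*jj) (by omega)
      rw [rowA_1 k nc K A ystar jj hjk hknc, rowA_0 k nc K A ystar jj hjk hknc] at hr1
      obtain ⟨i0, hi0⟩ := Finset.card_eq_one.mp (hKcol jj hjk).1
      have hi0mem : i0 ∈ (range nr).filter fun i => A i jj = K := by
        rw [hi0]; exact mem_singleton_self i0
      rw [mem_filter, mem_range] at hi0mem
      obtain ⟨hi0r, hi0K⟩ := hi0mem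
      have hr2 := hrow (2*jj+1) (by omega) hvpos (2*k+i0) (by omega)
      rw [rowA_1 k nc K A ystar jj hjk hknc] at hr2
      have henc := rowA_enc_ge k nc nr K A ystar i0 jj hi0r hjk hknc hi0K (by linarith)
        (fun i hi j2 hj2 => (hA i hi j2 hj2).1) hy0
      have hKb : 2 * ystar (3*jj+1) ≤ K/2 * ystar (3*jj+1) := by
        have := mul_nonneg (show (0:ℝ) ≤ K - 4 by linarith) (hy0 (3*jj+1))
        nlinarith
      -- now linear arithmetic
      have hb2a : ystar (3*jj+1) ≥ 2 * ystar (3*jj) - ε := by linarith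
      have hcb : ystar (3*jj+2) ≥ ystar (3*jj+1) - ε := by linarith
      linarith
    · rw [if_neg hjk]
      have : scs1Y k ε ystar jj = ystar (2*k+jj) := by simp [scs1Y, hjk]
      rw [this] at hpos
      exact hpos
  -- best response property
  have hbr : ∀ jj < nc, 0 < scs1Y k ε ystar jj → ∀ c' < 2*k+nc,
      ∑ i ∈ range nr, xstar (2*k+i) * B i jj
        ≥ (∑ r ∈ range (2*k+nr), xstar r * scs1B k B r c') - ε := by
    intro jj hjjnc hpos c' hc'
    have h1 := hsupp jj hjjnc hpos
    have h2 := hcol (if jj < k then 3*jj+2 else 2*k+jj) (hcIdxlt jj hjjnc) h1 c' hc'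
    rw [colB_pay] at h2
    exact h2
  have hYj : 0 < scs1Y k ε ystar j := by
    rcases div_pos_iff.mp hyj with ⟨h, _⟩ | ⟨_, h⟩
    · exact h
    · linarith
  have hYj' : 0 < scs1Y k ε ystar j' := by
    rcases div_pos_iff.mp hyj' with ⟨h, _⟩ | ⟨_, h⟩
    · exact h
    · linarith
  -- lower bound on X
  have hXlb : 1 ≤ 48 * (n:ℝ) * X := by
    by_cases hXbig : (1:ℝ)/48 ≤ X
    · have := mul_le_mul_of_nonneg_right hnR1 (le_of_lt hX0)
      nlinarith
    · push_neg at hXbig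
      have hk1 : 0 < k := by
        by_contra h
        have hk0 : k = 0 := by omega
        rw [hk0] at hgad; simp at hgad
        linarith
      obtain ⟨jj, hjm, hjv⟩ := myExists_mul_ge_sum k (fun jj => xstar (2*jj) + xstar (2*jj+1)) hk1
      rw [hgad] at hjv
      have hjk := mem_range.mp hjm
      have hPj := hPub j hj
      have hkuv : (k:ℝ) * (xstar (2*jj) + xstar (2*jj+1)) ≤
          (n:ℝ) * (xstar (2*jj) + xstar (2*jj+1)) :=
        mul_le_mul_of_nonneg_right hkR (by nlinarith [hx0 (2*jj), hx0 (2*jj+1)])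
      by_cases huv : xstar (2*jj) ≤ xstar (2*jj+1)
      · have hbrj := hbr j hj hYj (3*jj) (by omega)
        rw [colB_T0 k nr B xstar jj hjk] at hbrj
        -- v ≤ 8X + ε ; 1 - X ≤ k(u+v) ≤ n(u+v) ≤ 2nv ≤ 2n(8X+ε)
        have h1 : (n:ℝ) * (xstar (2*jj) + xstar (2*jj+1)) ≤ (n:ℝ) * (2 * xstar (2*jj+1)) :=
          mul_le_mul_of_nonneg_left (by linarith) (by linarith)
        have h2 : (n:ℝ) * xstar (2*jj+1) ≤ (n:ℝ) * (8*X + ε) :=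
          mul_le_mul_of_nonneg_left (by linarith) (by linarith)
        linarith
      · have hbrj := hbr j hj hYj (3*jj+1) (by omega)
        rw [colB_T1 k nr B xstar jj hjk] at hbrj
        have h1 : (n:ℝ) * (xstar (2*jj) + xstar (2*jj+1)) ≤ (n:ℝ) * (2 * xstar (2*jj)) :=
          mul_le_mul_of_nonneg_left (by linarith) (by linarith)
        have h2 : (n:ℝ) * xstar (2*jj) ≤ (n:ℝ) * (8*X + ε) :=
          mul_le_mul_of_nonneg_left (by linarith) (by linarith)
        linarith
  -- payoffs of the two supported columns differ by at most ε
  have hPjj' : |(∑ i ∈ range nr, xstar (2*k+i) * B i j)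
      - (∑ i ∈ range nr, xstar (2*k+i) * B i j')| ≤ ε := by
    have h1 := hbr j hj hYj (if j' < k then 3*j'+2 else 2*k+j') (hcIdxlt j' hj')
    rw [colB_pay] at h1
    have h2 := hbr j' hj' hYj' (if j < k then 3*j+2 else 2*k+j) (hcIdxlt j hj)
    rw [colB_pay] at h2
    rw [abs_le]
    constructor <;> linarith
  -- final algebra
  have hsum_eq : ∀ jj, ∑ i ∈ range nr, (xstar (2*k+i) / X) * B i jj
      = (∑ i ∈ range nr, xstar (2*k+i) * B i jj) / X := by
    intro jj
    rw [sum_div]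
    apply sum_congr rfl
    intro i _
    rw [div_mul_eq_mul_div]
  rw [hsum_eq, hsum_eq, div_sub_div_same, abs_div, abs_of_pos hX0]
  rw [div_le_iff₀ hX0]
  calc |(∑ i ∈ range nr, xstar (2*k+i) * B i j)
      - (∑ i ∈ range nr, xstar (2*k+i) * B i j')| ≤ ε := hPjj'
    _ ≤ 48 * (n:ℝ) * ε * X := by
        have := mul_le_mul_of_nonneg_left hXlb hε0
        nlinarith
end

section
/- Let (A,B) and (A′,B′) be as in the type-one single column simulation with 4 ≤ K ≤ 8, let 0 ≤ ε < 1/(240·n²), let (x*,y*) be an ε-WSNE of (A′,B′), and assume the renormalizations defining the translated profile (x,y) are valid (the vectors x′ and y′ have positive sums). Then |(A·y)_i − (A·y)_{i′}| ≤ 3950·n²·ε for all rows i, i′ of A with x_i > 0 and x_{i′} > 0 (3950·n²·ε is an explicit form of the paper's O(n²·ε) bound). -/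
open Finset
open scoped Classical

section myscsHelpers

lemma myscs_sum3 (k : ℕ) (f : ℕ → ℝ) :
    ∑ c ∈ range (3*k), f c = ∑ j ∈ range k, (f (3*j) + f (3*j+1) + f (3*j+2)) := by
  induction k with
  | zero => simp
  | succ k ih =>
    rw [show 3*(k+1) = 3*k+1+1+1 by ring, sum_range_succ, sum_range_succ, sum_range_succ, ih,
      sum_range_succ]
    ring

lemma myscs_sum2 (k : ℕ) (f : ℕ → ℝ) :
    ∑ c ∈ range (2*k), f c = ∑ j ∈ range k, (f (2*j) + f (2*j+1)) := by
  induction k with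
  | zero => simp
  | succ k ih =>
    rw [show 2*(k+1) = 2*k+1+1 by ring, sum_range_succ, sum_range_succ, ih, sum_range_succ]
    ring

end myscsHelpers

section myscsPayoffs

lemma myscs_gadget_sum_eq (k nr : ℕ) (B : ℕ → ℕ → ℝ) (x : ℕ → ℝ) (c : ℕ) :
    ∑ r ∈ range (2*k+nr), x r * scs1B k B r c
      = (∑ r ∈ range (2*k), x r * scs1B k B r c)
        + ∑ i ∈ range nr, x (2*k+i) * scs1B k B (2*k+i) c := by
  rw [Finset.sum_range_add]

lemma myscs_CP1 (k nr j : ℕ) (B : ℕ → ℕ → ℝ) (x : ℕ → ℝ) (hj : j < k) :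
    ∑ r ∈ range (2*k+nr), x r * scs1B k B r (3*j) = x (2*j+1) := by
  rw [myscs_gadget_sum_eq]
  have h1 : ∑ r ∈ range (2*k), x r * scs1B k B r (3*j)
      = ∑ r ∈ range (2*k), (if r = 2*j+1 then x r else 0) := by
    refine Finset.sum_congr rfl fun r hr => ?_
    simp only [mem_range] at hr
    simp only [scs1B, if_pos hr]
    split_ifs <;> first | ring1 | (exfalso; first | omega | assumption)
  have h2 : ∀ i ∈ range nr, x (2*k+i) * scs1B k B (2*k+i) (3*j) = 0 := by
    intro i _
    simp only [scs1B]
    rw [if_neg (by omega), if_pos (by omega), if_neg (by omega)]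
    ring
  rw [h1, Finset.sum_ite_eq' (range (2*k)) (2*j+1) x, if_pos (by simp only [mem_range]; omega),
    Finset.sum_congr rfl h2]
  simp

lemma myscs_CP2 (k nr j : ℕ) (B : ℕ → ℕ → ℝ) (x : ℕ → ℝ) (hj : j < k) :
    ∑ r ∈ range (2*k+nr), x r * scs1B k B r (3*j+1) = x (2*j) := by
  rw [myscs_gadget_sum_eq]
  have h1 : ∑ r ∈ range (2*k), x r * scs1B k B r (3*j+1)
      = ∑ r ∈ range (2*k), (if r = 2*j then x r else 0) := by
    refine Finset.sum_congr rfl fun r hr => ?_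
    simp only [mem_range] at hr
    simp only [scs1B, if_pos hr]
    split_ifs <;> first | ring1 | (exfalso; first | omega | assumption)
  have h2 : ∀ i ∈ range nr, x (2*k+i) * scs1B k B (2*k+i) (3*j+1) = 0 := by
    intro i _
    simp only [scs1B]
    rw [if_neg (by omega), if_pos (by omega), if_neg (by omega)]
    ring
  rw [h1, Finset.sum_ite_eq' (range (2*k)) (2*j) x, if_pos (by simp only [mem_range]; omega),
    Finset.sum_congr rfl h2]
  simp

lemma myscs_CP3 (k nr j : ℕ) (B : ℕ → ℕ → ℝ) (x : ℕ → ℝ) (hj : j < k) :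
    ∑ r ∈ range (2*k+nr), x r * scs1B k B r (3*j+2) = ∑ i ∈ range nr, x (2*k+i) * B i j := by
  rw [myscs_gadget_sum_eq]
  have h1 : ∀ r ∈ range (2*k), x r * scs1B k B r (3*j+2) = 0 := by
    intro r hr
    simp only [mem_range] at hr
    simp only [scs1B, if_pos hr]
    rw [if_neg (by omega), if_neg (by omega)]
    ring
  have h2 : ∀ i ∈ range nr, x (2*k+i) * scs1B k B (2*k+i) (3*j+2) = x (2*k+i) * B i j := by
    intro i _
    simp only [scs1B]
    rw [if_neg (by omega), if_pos (by omega), if_pos (by omega),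
      show 2*k+i-2*k = i by omega, show (3*j+2)/3 = j by omega]
  rw [Finset.sum_congr rfl h1, Finset.sum_congr rfl h2]
  simp

lemma myscs_CPe (k nr j : ℕ) (B : ℕ → ℕ → ℝ) (x : ℕ → ℝ) (hkj : k ≤ j) :
    ∑ r ∈ range (2*k+nr), x r * scs1B k B r (2*k+j) = ∑ i ∈ range nr, x (2*k+i) * B i j := by
  rw [myscs_gadget_sum_eq]
  have h1 : ∀ r ∈ range (2*k), x r * scs1B k B r (2*k+j) = 0 := by
    intro r hr
    simp only [mem_range] at hr
    simp only [scs1B, if_pos hr]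
    rw [if_neg (by omega), if_neg (by omega)]
    ring
  have h2 : ∀ i ∈ range nr, x (2*k+i) * scs1B k B (2*k+i) (2*k+j) = x (2*k+i) * B i j := by
    intro i _
    simp only [scs1B]
    rw [if_neg (by omega), if_neg (by omega), show 2*k+i-2*k = i by omega,
      show 2*k+j-2*k = j by omega]
  rw [Finset.sum_congr rfl h1, Finset.sum_congr rfl h2]
  simp

lemma myscs_RP1 (k nc j : ℕ) (K : ℝ) (A : ℕ → ℕ → ℝ) (y : ℕ → ℝ) (hj : j < k) (hknc : k ≤ nc) :
    ∑ c ∈ range (2*k+nc), scs1A k K A (2*j) c * y c = 2 * y (3*j) + y (3*j+2) := by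
  have h1 : ∀ c ∈ range (2*k+nc), scs1A k K A (2*j) c * y c
      = (if c = 3*j then 2 * y c else 0) + (if c = 3*j+2 then y c else 0) := by
    intro c _
    simp only [scs1A, if_pos (show 2*j < 2*k by omega), show 2*j/2 = j by omega,
      show (2*j) % 2 = 0 by omega]
    split_ifs <;> first | ring1 | (exfalso; first | omega | assumption)
  rw [Finset.sum_congr rfl h1, Finset.sum_add_distrib,
    Finset.sum_ite_eq' (range (2*k+nc)) (3*j) (fun c => 2 * y c),
    Finset.sum_ite_eq' (range (2*k+nc)) (3*j+2) y,
    if_pos (by simp only [mem_range]; omega), if_pos (by simp only [mem_range]; omega)]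

lemma myscs_RP2 (k nc j : ℕ) (K : ℝ) (A : ℕ → ℕ → ℝ) (y : ℕ → ℝ) (hj : j < k) (hknc : k ≤ nc) :
    ∑ c ∈ range (2*k+nc), scs1A k K A (2*j+1) c * y c = y (3*j+1) + y (3*j+2) := by
  have h1 : ∀ c ∈ range (2*k+nc), scs1A k K A (2*j+1) c * y c
      = (if c = 3*j+1 then y c else 0) + (if c = 3*j+2 then y c else 0) := by
    intro c _
    simp only [scs1A, if_pos (show 2*j+1 < 2*k by omega), show (2*j+1)/2 = j by omega,
      show (2*j+1) % 2 = 1 by omega]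
    split_ifs <;> first | ring1 | (exfalso; first | omega | assumption)
  rw [Finset.sum_congr rfl h1, Finset.sum_add_distrib,
    Finset.sum_ite_eq' (range (2*k+nc)) (3*j+1) y,
    Finset.sum_ite_eq' (range (2*k+nc)) (3*j+2) y,
    if_pos (by simp only [mem_range]; omega), if_pos (by simp only [mem_range]; omega)]

lemma myscs_RPe (k nc i : ℕ) (K : ℝ) (A : ℕ → ℕ → ℝ) (y : ℕ → ℝ) (hknc : k ≤ nc) :
    ∑ c ∈ range (2*k+nc), scs1A k K A (2*k+i) c * y c
      = (∑ j ∈ range k, ((if A i j = 1 then (1:ℝ) else 0) * y (3*j)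
          + (if A i j = K then K/2 else if A i j = 2 then 1 else 0) * y (3*j+1)))
        + ∑ t ∈ range (nc-k), A i (k+t) * y (3*k+t) := by
  rw [show 2*k+nc = 3*k + (nc-k) by omega, Finset.sum_range_add, myscs_sum3]
  congr 1
  · refine Finset.sum_congr rfl fun j hj => ?_
    simp only [mem_range] at hj
    have e0 : scs1A k K A (2*k+i) (3*j) = (if A i j = 1 then (1:ℝ) else 0) := by
      simp only [scs1A]
      rw [if_neg (by omega), if_pos (by omega), if_pos (by omega),
        show 2*k+i-2*k = i by omega, show 3*j/3 = j by omega]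
    have e1 : scs1A k K A (2*k+i) (3*j+1)
        = (if A i j = K then K/2 else if A i j = 2 then 1 else 0) := by
      simp only [scs1A]
      rw [if_neg (by omega), if_pos (by omega), if_neg (by omega), if_pos (by omega),
        show 2*k+i-2*k = i by omega, show (3*j+1)/3 = j by omega]
    have e2 : scs1A k K A (2*k+i) (3*j+2) = 0 := by
      simp only [scs1A]
      rw [if_neg (by omega), if_pos (by omega), if_neg (by omega), if_neg (by omega)]
    rw [e0, e1, e2]
    ring
  · refine Finset.sum_congr rfl fun t ht => ?_
    simp only [mem_range] at ht
    have e3 : scs1A k K A (2*k+i) (3*k+t) = A i (k+t) := by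
      simp only [scs1A]
      rw [if_neg (by omega), if_neg (by omega), show 2*k+i-2*k = i by omega,
        show 3*k+t-2*k = k+t by omega]
    rw [e3]

end myscsPayoffs

set_option maxHeartbeats 1600000 in
/-- If `4 ≤ K ≤ 8`, `0 ≤ ε < 1/(240 n²)`, `(x*, y*)` is an `ε`-WSNE of `(A', B')`
and the renormalizations defining the translated profile `(x, y)` are valid, then
`|(A·y)_i − (A·y)_{i'}| ≤ 3950·n²·ε` for all rows `i, i'` of `A` with `x_i > 0`
and `x_{i'} > 0`. -/
theorem stmt13 (n nr nc k : ℕ) (K ε : ℝ) (A B : ℕ → ℕ → ℝ) (xstar ystar : ℕ → ℝ)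
    (hK4 : 4 ≤ K) (hK8 : K ≤ 8)
    (hin : Scs1Input n nr nc k K A B)
    (hε0 : 0 ≤ ε) (hε : ε < 1 / (240 * (n:ℝ)^2))
    (hwsne : IsWSNE (2*k+nr) (2*k+nc) (scs1A k K A) (scs1B k B) xstar ystar ε)
    (hxval : 0 < ∑ i ∈ range nr, xstar (2*k+i))
    (hyval : 0 < ∑ j ∈ range nc, scs1Y k ε ystar j) :
    ∀ i < nr, ∀ i' < nr,
      0 < xstar (2*k+i) / ∑ i'' ∈ range nr, xstar (2*k+i'') →
      0 < xstar (2*k+i') / ∑ i'' ∈ range nr, xstar (2*k+i'') →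
      |(∑ j ∈ range nc, A i j * (scs1Y k ε ystar j / ∑ j' ∈ range nc, scs1Y k ε ystar j')) -
       (∑ j ∈ range nc, A i' j * (scs1Y k ε ystar j / ∑ j' ∈ range nc, scs1Y k ε ystar j'))| ≤
        3950 * (n:ℝ)^2 * ε := by
  
  intro i hi i' hi' hxi hxi'
  obtain ⟨hnr, hnc, hknc, hA, hBb, hArow, hAcol, hBrow, hBcol, hKcol, hnoK⟩ := hin
  obtain ⟨hxnn, hxz, hxsum, hynn, hyz, hysum, hrow, hcol⟩ := hwsne
  -- basic numeric facts
  have hn1 : 1 ≤ n := by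
    rcases Nat.eq_zero_or_pos n with h | h
    · subst h; norm_num at hε; linarith
    · exact h
  have hn : (1:ℝ) ≤ (n:ℝ) := by exact_mod_cast hn1
  have hn0 : (0:ℝ) ≤ (n:ℝ) := by linarith
  have hε' : ε * (240 * (n:ℝ)^2) < 1 := by
    rw [lt_div_iff₀ (by nlinarith)] at hε
    exact hε
  have hk_n : (k:ℝ) ≤ (n:ℝ) := by exact_mod_cast (le_trans hknc hnc)
  have hnc_n : (nc:ℝ) ≤ (n:ℝ) := by exact_mod_cast hnc
  have hnε : (n:ℝ) * ε ≤ 1/240 := by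
    have p := mul_nonneg (sub_nonneg.mpr hn) (mul_nonneg hn0 hε0)
    nlinarith [p, hε', hε0]
  have hn2ε : (n:ℝ)^2 * ε ≤ 1/240 := by nlinarith [hε']
  -- positivity of the two supported entries
  have hxip : 0 < xstar (2*k+i) := by
    by_contra h
    push_neg at h
    rw [le_antisymm h (hxnn (2*k+i)), zero_div] at hxi
    exact absurd hxi (lt_irrefl 0)
  have hxi'p : 0 < xstar (2*k+i') := by
    by_contra h
    push_neg at h
    rw [le_antisymm h (hxnn (2*k+i')), zero_div] at hxi'
    exact absurd hxi' (lt_irrefl 0)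
  -- it is impossible that every column payoff is at most ε
  have hAllSmall : ¬ (∀ c0 < 2*k+nc, ∑ r ∈ range (2*k+nr), xstar r * scs1B k B r c0 ≤ ε) := by
    intro hsm
    have hP : ∀ j' < nc, ∑ i0 ∈ range nr, xstar (2*k+i0) * B i0 j' ≤ ε := by
      intro j' hj'
      by_cases hj'k : j' < k
      · have := hsm (3*j'+2) (by omega)
        rwa [myscs_CP3 k nr j' B xstar hj'k] at this
      · have := hsm (2*k+j') (by omega)
        rwa [myscs_CPe k nr j' B xstar (by omega)] at this
    have h2k : ∑ r ∈ range (2*k), xstar r ≤ 2*(k:ℝ)*ε := by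
      rw [myscs_sum2]
      calc ∑ j' ∈ range k, (xstar (2*j') + xstar (2*j'+1))
          ≤ ∑ _j' ∈ range k, (ε + ε) := by
            apply Finset.sum_le_sum
            intro j' hj'
            simp only [mem_range] at hj'
            have ha := hsm (3*j'+1) (by omega)
            rw [myscs_CP2 k nr j' B xstar hj'] at ha
            have hb := hsm (3*j') (by omega)
            rw [myscs_CP1 k nr j' B xstar hj'] at hb
            linarith
        _ = 2*(k:ℝ)*ε := by
            rw [Finset.sum_const, card_range, nsmul_eq_mul]; ring
    have hsplitx : (∑ r ∈ range (2*k), xstar r) + ∑ i0 ∈ range nr, xstar (2*k+i0) = 1 := by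
      rw [← Finset.sum_range_add]; exact hxsum
    have hXe : ∑ i0 ∈ range nr, xstar (2*k+i0)
        ≤ ∑ j' ∈ range nc, ∑ i0 ∈ range nr, xstar (2*k+i0) * B i0 j' := by
      rw [Finset.sum_comm]
      apply Finset.sum_le_sum
      intro i0 hi0
      simp only [mem_range] at hi0
      obtain ⟨j0, hj0, hB1⟩ := hBrow i0 hi0
      calc xstar (2*k+i0) = xstar (2*k+i0) * 1 := (mul_one _).symm
        _ ≤ xstar (2*k+i0) * B i0 j0 := mul_le_mul_of_nonneg_left hB1 (hxnn _)
        _ ≤ ∑ j' ∈ range nc, xstar (2*k+i0) * B i0 j' := by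
            apply Finset.single_le_sum
              (fun j' hj' => mul_nonneg (hxnn _) ((hBb i0 hi0 j' (mem_range.mp hj')).1))
              (mem_range.mpr hj0)
    have hsumP : ∑ j' ∈ range nc, ∑ i0 ∈ range nr, xstar (2*k+i0) * B i0 j' ≤ (nc:ℝ) * ε := by
      calc ∑ j' ∈ range nc, ∑ i0 ∈ range nr, xstar (2*k+i0) * B i0 j'
          ≤ ∑ _j' ∈ range nc, ε := Finset.sum_le_sum (fun j' hj' => hP j' (mem_range.mp hj'))
        _ = (nc:ℝ) * ε := by rw [Finset.sum_const, card_range, nsmul_eq_mul]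
    have h3 : 1 ≤ 3*(n:ℝ)*ε := by
      have pk : 0 ≤ ((n:ℝ) - k) * ε := mul_nonneg (sub_nonneg.mpr hk_n) hε0
      have pnc : 0 ≤ ((n:ℝ) - nc) * ε := mul_nonneg (sub_nonneg.mpr hnc_n) hε0
      linarith only [hsplitx, h2k, hXe, hsumP, pk, pnc]
    have h4 := mul_le_mul_of_nonneg_left h3 hn0
    linarith only [h4, hn, hε']
  -- the matching pennies gadget guarantees
  have hG1 : ∀ j < k, ystar (3*j+1) ≤ 2 * ystar (3*j) + ε := by
    intro j hj
    rcases le_or_gt (ystar (3*j+1)) 0 with hb | hb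
    · have := hynn (3*j); linarith
    · have hcc := hcol (3*j+1) (by omega) hb
      by_cases hx2j : 0 < xstar (2*j)
      · have hr := hrow (2*j) (by omega) hx2j (2*j+1) (by omega)
        rw [myscs_RP1 k nc j K A ystar hj hknc, myscs_RP2 k nc j K A ystar hj hknc] at hr
        linarith
      · exfalso
        apply hAllSmall
        intro c0 hc0
        have h := hcc c0 hc0
        rw [myscs_CP2 k nr j B xstar hj] at h
        have hx0 : xstar (2*j) = 0 := le_antisymm (not_lt.mp hx2j) (hxnn _)
        rw [hx0] at h
        linarith
  have hG2 : ∀ j < k, 2 * ystar (3*j) ≤ ystar (3*j+1) + ε := by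
    intro j hj
    rcases le_or_gt (ystar (3*j)) 0 with ha | ha
    · have h1 := hynn (3*j); have h2 := hynn (3*j+1); linarith
    · have hcc := hcol (3*j) (by omega) ha
      by_cases hx2j : 0 < xstar (2*j+1)
      · have hr := hrow (2*j+1) (by omega) hx2j (2*j) (by omega)
        rw [myscs_RP1 k nc j K A ystar hj hknc, myscs_RP2 k nc j K A ystar hj hknc] at hr
        linarith
      · exfalso
        apply hAllSmall
        intro c0 hc0
        have h := hcc c0 hc0
        rw [myscs_CP1 k nr j B xstar hj] at h
        have hx0 : xstar (2*j+1) = 0 := le_antisymm (not_lt.mp hx2j) (hxnn _)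
        rw [hx0] at h
        linarith
  -- payoff of the supported encoding row i
  have hRPi := myscs_RPe k nc i K A ystar hknc
  have hcj : ∀ j < k, ystar (3*j+2)
      ≤ (∑ c ∈ range (2*k+nc), scs1A k K A (2*k+i) c * ystar c) + ε := by
    intro j hj
    have hr := hrow (2*k+i) (by omega) hxip (2*j) (by omega)
    rw [myscs_RP1 k nc j K A ystar hj hknc] at hr
    have := hynn (3*j)
    linarith
  -- sum splits
  have hysplit : (∑ j ∈ range k, ystar (3*j)) + (∑ j ∈ range k, ystar (3*j+1))
      + (∑ j ∈ range k, ystar (3*j+2)) + (∑ t ∈ range (nc-k), ystar (3*k+t)) = 1 := by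
    have h := hysum
    rw [show 2*k+nc = 3*k + (nc-k) by omega, Finset.sum_range_add, myscs_sum3,
      Finset.sum_add_distrib, Finset.sum_add_distrib] at h
    linarith
  have hSAnn : 0 ≤ ∑ j ∈ range k, ystar (3*j) := Finset.sum_nonneg fun _ _ => hynn _
  have hSBnn : 0 ≤ ∑ j ∈ range k, ystar (3*j+1) := Finset.sum_nonneg fun _ _ => hynn _
  have hSDnn : 0 ≤ ∑ t ∈ range (nc-k), ystar (3*k+t) := Finset.sum_nonneg fun _ _ => hynn _
  -- upper bound on the payoff of row 2k+i
  have hWle : (∑ c ∈ range (2*k+nc), scs1A k K A (2*k+i) c * ystar c)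
      ≤ 8 * ((∑ j ∈ range k, ystar (3*j)) + (∑ j ∈ range k, ystar (3*j+1))
        + (∑ t ∈ range (nc-k), ystar (3*k+t))) := by
    rw [hRPi]
    have h1 : (∑ j ∈ range k, ((if A i j = 1 then (1:ℝ) else 0) * ystar (3*j)
          + (if A i j = K then K/2 else if A i j = 2 then 1 else 0) * ystar (3*j+1)))
        ≤ ∑ j ∈ range k, (ystar (3*j) + 4 * ystar (3*j+1)) := by
      apply Finset.sum_le_sum
      intro j hj
      have ha := hynn (3*j); have hb := hynn (3*j+1)
      gcongr ?_ + ?_ * _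
      · split_ifs <;> linarith
      · split_ifs <;> linarith
    have h2 : (∑ t ∈ range (nc-k), A i (k+t) * ystar (3*k+t))
        ≤ ∑ t ∈ range (nc-k), 8 * ystar (3*k+t) := by
      apply Finset.sum_le_sum
      intro t ht
      simp only [mem_range] at ht
      obtain ⟨h5, h6⟩ := hA i hi (k+t) (by omega)
      have h7 := hynn (3*k+t)
      have h8 := mul_le_mul_of_nonneg_right (le_trans h6 hK8) h7
      linarith
    have h3 : (∑ j ∈ range k, (ystar (3*j) + 4 * ystar (3*j+1)))
          + ∑ t ∈ range (nc-k), 8 * ystar (3*k+t)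
        ≤ 8 * ((∑ j ∈ range k, ystar (3*j)) + (∑ j ∈ range k, ystar (3*j+1))
          + (∑ t ∈ range (nc-k), ystar (3*k+t))) := by
      rw [Finset.sum_add_distrib, ← Finset.mul_sum, ← Finset.mul_sum]
      linarith
    exact le_trans (add_le_add h1 h2) h3
  have hSC : (∑ j ∈ range k, ystar (3*j+2))
      ≤ (k:ℝ) * ((∑ c ∈ range (2*k+nc), scs1A k K A (2*k+i) c * ystar c) + ε) := by
    calc (∑ j ∈ range k, ystar (3*j+2))
        ≤ ∑ _j ∈ range k, ((∑ c ∈ range (2*k+nc), scs1A k K A (2*k+i) c * ystar c) + ε) :=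
          Finset.sum_le_sum (fun j hj => hcj j (mem_range.mp hj))
      _ = _ := by rw [Finset.sum_const, card_range, nsmul_eq_mul]
  -- lower bound on M = SA + SB + SD
  have hM : 239/2160 ≤ (n:ℝ) * ((∑ j ∈ range k, ystar (3*j)) + (∑ j ∈ range k, ystar (3*j+1))
      + (∑ t ∈ range (nc-k), ystar (3*k+t))) := by
    have hk0 : (0:ℝ) ≤ (k:ℝ) := Nat.cast_nonneg k
    have p1 : (0:ℝ) ≤ (k:ℝ) * (8 * ((∑ j ∈ range k, ystar (3*j)) + (∑ j ∈ range k, ystar (3*j+1))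
        + (∑ t ∈ range (nc-k), ystar (3*k+t)))
        - (∑ c ∈ range (2*k+nc), scs1A k K A (2*k+i) c * ystar c)) :=
      mul_nonneg hk0 (sub_nonneg.mpr hWle)
    have p2 : (0:ℝ) ≤ ((n:ℝ) - (k:ℝ)) * (8 * ((∑ j ∈ range k, ystar (3*j))
        + (∑ j ∈ range k, ystar (3*j+1)) + (∑ t ∈ range (nc-k), ystar (3*k+t))) + ε) :=
      mul_nonneg (sub_nonneg.mpr hk_n) (by linarith)
    have p3 : (0:ℝ) ≤ ((n:ℝ) - 1) * ((∑ j ∈ range k, ystar (3*j))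
        + (∑ j ∈ range k, ystar (3*j+1)) + (∑ t ∈ range (nc-k), ystar (3*k+t))) :=
      mul_nonneg (by linarith) (by linarith)
    linarith only [hysplit, hSC, hnε, p1, p2, p3, hSAnn, hSBnn, hSDnn]
  -- lower bound on the translated column mass
  have hYsplit : (∑ j' ∈ range nc, scs1Y k ε ystar j')
      = (∑ j ∈ range k, scs1Y k ε ystar j) + ∑ t ∈ range (nc-k), ystar (3*k+t) := by
    conv_lhs => rw [show nc = k + (nc-k) by omega, Finset.sum_range_add]
    congr 1
    refine Finset.sum_congr rfl fun t ht => ?_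
    simp only [scs1Y, if_neg (show ¬ (k+t < k) by omega)]
    rw [show 2*k+(k+t) = 3*k+t by omega]
  have hytnn : ∀ j, 0 ≤ scs1Y k ε ystar j := by
    intro j
    simp only [scs1Y]
    split_ifs <;> first | exact hynn _ | exact le_refl 0
  have hs3 : (∑ j ∈ range k, ystar (3*j)) + (∑ j ∈ range k, ystar (3*j+1))
      ≤ 3 * (∑ j ∈ range k, scs1Y k ε ystar j) + (k:ℝ) * (11*ε) := by
    calc (∑ j ∈ range k, ystar (3*j)) + (∑ j ∈ range k, ystar (3*j+1))
        = ∑ j ∈ range k, (ystar (3*j) + ystar (3*j+1)) := (Finset.sum_add_distrib).symm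
      _ ≤ ∑ j ∈ range k, (3 * scs1Y k ε ystar j + 11*ε) := by
          apply Finset.sum_le_sum
          intro j hj
          simp only [mem_range] at hj
          simp only [scs1Y, if_pos hj]
          by_cases hth : 11 * ε ≤ ystar (3*j) + ystar (3*j+1)
          · rw [if_pos hth]
            have := hG1 j hj
            linarith [hε0]
          · rw [if_neg hth]
            push_neg at hth
            linarith
      _ = 3 * (∑ j ∈ range k, scs1Y k ε ystar j) + (k:ℝ) * (11*ε) := by
          rw [Finset.sum_add_distrib, ← Finset.mul_sum, Finset.sum_const, card_range,
            nsmul_eq_mul]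
  have hStnn : 0 ≤ ∑ j ∈ range k, scs1Y k ε ystar j :=
    Finset.sum_nonneg fun j _ => hytnn j
  have hnY : 7/324 ≤ (n:ℝ) * (∑ j' ∈ range nc, scs1Y k ε ystar j') := by
    rw [hYsplit]
    have q1 := mul_le_mul_of_nonneg_left hs3 hn0
    have q2 : (k:ℝ) * (11*ε) ≤ (n:ℝ) * (11*ε) := by
      apply mul_le_mul_of_nonneg_right hk_n
      linarith
    have q3 := mul_le_mul_of_nonneg_left q2 hn0
    linarith only [q1, q3, hM, hn2ε, mul_nonneg hn0 hSDnn, mul_nonneg hn0 hStnn]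
  -- per-column simulation error
  have herr : ∀ i0 < nr, ∀ j < k,
      |A i0 j * scs1Y k ε ystar j - ((if A i0 j = 1 then (1:ℝ) else 0) * ystar (3*j)
        + (if A i0 j = K then K/2 else if A i0 j = 2 then 1 else 0) * ystar (3*j+1))|
      ≤ 31 * ε := by
    intro i0 hi0 j hj
    have hg1 := hG1 j hj
    have hg2 := hG2 j hj
    have hann := hynn (3*j)
    have hbnn := hynn (3*j+1)
    obtain ⟨-, hvals, -⟩ := hKcol j hj
    simp only [scs1Y, if_pos hj]
    rcases hvals i0 hi0 with h0 | h1 | h2 | hKv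
    · rw [h0, if_neg (show ¬((0:ℝ) = 1) by norm_num),
        if_neg (show ¬((0:ℝ) = K) by intro h; rw [← h] at hK4; norm_num at hK4),
        if_neg (show ¬((0:ℝ) = 2) by norm_num), abs_le]
      constructor <;> [linarith only [hε0]; linarith only [hε0]]
    · rw [h1, if_pos rfl,
        if_neg (show ¬((1:ℝ) = K) by intro h; rw [← h] at hK4; norm_num at hK4),
        if_neg (show ¬((1:ℝ) = 2) by norm_num)]
      by_cases hth : 11 * ε ≤ ystar (3*j) + ystar (3*j+1)
      · rw [if_pos hth, abs_le]
        constructor <;> [linarith only [hε0]; linarith only [hε0]]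
      · rw [if_neg hth, abs_le]
        push_neg at hth
        constructor <;> [linarith only [hε0, hth, hbnn]; linarith only [hε0, hann]]
    · rw [h2, if_neg (show ¬((2:ℝ) = 1) by norm_num),
        if_neg (show ¬((2:ℝ) = K) by intro h; rw [← h] at hK4; norm_num at hK4),
        if_pos rfl]
      by_cases hth : 11 * ε ≤ ystar (3*j) + ystar (3*j+1)
      · rw [if_pos hth, abs_le]
        constructor <;> [linarith only [hε0, hg1, hg2]; linarith only [hε0, hg1, hg2]]
      · rw [if_neg hth, abs_le]
        push_neg at hth
        constructor <;> [linarith only [hε0, hg1, hth, hann, hbnn];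
          linarith only [hε0, hbnn]]
    · rw [hKv, if_neg (show ¬(K = (1:ℝ)) by intro h; rw [h] at hK4; norm_num at hK4),
        if_pos rfl]
      have hK0 : (0:ℝ) ≤ K := by linarith only [hK4]
      by_cases hth : 11 * ε ≤ ystar (3*j) + ystar (3*j+1)
      · rw [if_pos hth, abs_le]
        have m1 : K/2 * (2 * ystar (3*j) - ystar (3*j+1)) ≤ K/2 * ε :=
          mul_le_mul_of_nonneg_left (by linarith only [hg2]) (by linarith only [hK0])
        have m2 : K/2 * (ystar (3*j+1) - 2 * ystar (3*j)) ≤ K/2 * ε :=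
          mul_le_mul_of_nonneg_left (by linarith only [hg1]) (by linarith only [hK0])
        have m3 : (8 - K) * ε ≥ 0 := mul_nonneg (by linarith only [hK8]) hε0
        constructor <;> [linarith only [m2, m3, hε0]; linarith only [m1, m3, hε0]]
      · rw [if_neg hth, abs_le]
        push_neg at hth
        have hb23 : 3 * ystar (3*j+1) ≤ 23 * ε := by
          linarith only [hg1, hth, hann, hbnn]
        have m4 : (8 - K) * ystar (3*j+1) ≥ 0 :=
          mul_nonneg (by linarith only [hK8]) hbnn
        have m5 : K * ystar (3*j+1) ≥ 0 := mul_nonneg hK0 hbnn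
        constructor <;> [linarith only [m4, hb23, hε0]; linarith only [m5, hε0]]
  -- splitting the translated payoff sums
  have hu : ∀ i0 : ℕ, (∑ j ∈ range nc, A i0 j * scs1Y k ε ystar j)
      = (∑ j ∈ range k, A i0 j * scs1Y k ε ystar j)
        + ∑ t ∈ range (nc-k), A i0 (k+t) * ystar (3*k+t) := by
    intro i0
    conv_lhs => rw [show nc = k + (nc-k) by omega, Finset.sum_range_add]
    congr 1
    refine Finset.sum_congr rfl fun t ht => ?_
    simp only [scs1Y, if_neg (show ¬ (k+t < k) by omega)]
    rw [show 2*k+(k+t) = 3*k+t by omega]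
  have hdiff1 : ∀ i0 < nr,
      |(∑ j ∈ range nc, A i0 j * scs1Y k ε ystar j)
        - ∑ c ∈ range (2*k+nc), scs1A k K A (2*k+i0) c * ystar c| ≤ 31 * (k:ℝ) * ε := by
    intro i0 hi0
    rw [hu i0, myscs_RPe k nc i0 K A ystar hknc]
    have e : (∑ j ∈ range k, A i0 j * scs1Y k ε ystar j)
        + (∑ t ∈ range (nc-k), A i0 (k+t) * ystar (3*k+t))
        - ((∑ j ∈ range k, ((if A i0 j = 1 then (1:ℝ) else 0) * ystar (3*j)
          + (if A i0 j = K then K/2 else if A i0 j = 2 then 1 else 0) * ystar (3*j+1)))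
          + ∑ t ∈ range (nc-k), A i0 (k+t) * ystar (3*k+t))
        = ∑ j ∈ range k, (A i0 j * scs1Y k ε ystar j
          - ((if A i0 j = 1 then (1:ℝ) else 0) * ystar (3*j)
          + (if A i0 j = K then K/2 else if A i0 j = 2 then 1 else 0) * ystar (3*j+1))) := by
      rw [Finset.sum_sub_distrib]
      ring
    rw [e]
    calc |∑ j ∈ range k, (A i0 j * scs1Y k ε ystar j
          - ((if A i0 j = 1 then (1:ℝ) else 0) * ystar (3*j)
          + (if A i0 j = K then K/2 else if A i0 j = 2 then 1 else 0) * ystar (3*j+1)))|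
        ≤ ∑ j ∈ range k, |A i0 j * scs1Y k ε ystar j
          - ((if A i0 j = 1 then (1:ℝ) else 0) * ystar (3*j)
          + (if A i0 j = K then K/2 else if A i0 j = 2 then 1 else 0) * ystar (3*j+1))| :=
          Finset.abs_sum_le_sum_abs _ _
      _ ≤ ∑ _j ∈ range k, 31 * ε :=
          Finset.sum_le_sum (fun j hj => herr i0 hi0 j (mem_range.mp hj))
      _ = 31 * (k:ℝ) * ε := by rw [Finset.sum_const, card_range, nsmul_eq_mul]; ring
  -- supported encoding rows have ε-close payoffs in the big game
  have hWW : |(∑ c ∈ range (2*k+nc), scs1A k K A (2*k+i) c * ystar c)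
      - ∑ c ∈ range (2*k+nc), scs1A k K A (2*k+i') c * ystar c| ≤ ε := by
    have h1 := hrow (2*k+i) (by omega) hxip (2*k+i') (by omega)
    have h2 := hrow (2*k+i') (by omega) hxi'p (2*k+i) (by omega)
    rw [abs_le]
    constructor <;> linarith
  -- total difference bound
  have hud : |(∑ j ∈ range nc, A i j * scs1Y k ε ystar j)
      - ∑ j ∈ range nc, A i' j * scs1Y k ε ystar j| ≤ 63 * ((n:ℝ) * ε) := by
    have t1 := hdiff1 i hi
    have t2 := hdiff1 i' hi'
    have t3 := abs_sub_le (∑ j ∈ range nc, A i j * scs1Y k ε ystar j)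
      (∑ c ∈ range (2*k+nc), scs1A k K A (2*k+i) c * ystar c)
      (∑ j ∈ range nc, A i' j * scs1Y k ε ystar j)
    have t4 := abs_sub_le (∑ c ∈ range (2*k+nc), scs1A k K A (2*k+i) c * ystar c)
      (∑ c ∈ range (2*k+nc), scs1A k K A (2*k+i') c * ystar c)
      (∑ j ∈ range nc, A i' j * scs1Y k ε ystar j)
    rw [abs_sub_comm (∑ c ∈ range (2*k+nc), scs1A k K A (2*k+i') c * ystar c)
      (∑ j ∈ range nc, A i' j * scs1Y k ε ystar j)] at t4
    have hkε : 31 * (k:ℝ) * ε ≤ 31 * (n:ℝ) * ε := by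
      have := mul_nonneg (sub_nonneg.mpr hk_n) hε0
      linarith only [this]
    have hεn : ε ≤ (n:ℝ) * ε := by
      have := mul_nonneg (sub_nonneg.mpr hn) hε0
      linarith only [this]
    linarith only [t1, t2, t3, t4, hkε, hεn, hWW]
  -- conclusion
  have hYpos : 0 < ∑ j' ∈ range nc, scs1Y k ε ystar j' := hyval
  have hfd : ∀ i0 : ℕ, (∑ j ∈ range nc,
        A i0 j * (scs1Y k ε ystar j / ∑ j' ∈ range nc, scs1Y k ε ystar j'))
      = (∑ j ∈ range nc, A i0 j * scs1Y k ε ystar j) / ∑ j' ∈ range nc, scs1Y k ε ystar j' := by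
    intro i0
    rw [Finset.sum_div]
    exact Finset.sum_congr rfl fun j _ => (mul_div_assoc _ _ _).symm
  rw [hfd, hfd, div_sub_div_same, abs_div, abs_of_pos hYpos, div_le_iff₀ hYpos]
  have hfin := mul_le_mul_of_nonneg_left hnY
      (show (0:ℝ) ≤ 3950 * ((n:ℝ) * ε) by positivity)
  linarith only [hud, hfin, mul_nonneg hn0 hε0]
end

section
/- Let (A,B) satisfy the restricted {0,1,2,8} conditions (and the input assumptions of the type-one single column simulation), and let (A′,B′) be produced by the type-one single column simulation with K = 8. Then every column of A′ contains either at most three non-zero entries, all in {1,2}, with at most one 2, or a single entry 4 together with at most three entries 1; and every row of A′ contains either at most three entries 1, or a single entry 2 together with at most one entry 1, or exactly two entries 4 (all other entries 0). That is, A′ satisfies the column and row requirements of a stage 1 game. -/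
open Finset
open scoped Classical

/-- The column condition of the restricted `{0,1,2,8}` bimatrix conditions. -/
def ResCol (nr : ℕ) (col : ℕ → ℝ) : Prop :=
  ((∀ i < nr, col i = 0 ∨ col i = 1) ∧
    1 ≤ ((range nr).filter fun i => col i = 1).card ∧
    ((range nr).filter fun i => col i = 1).card ≤ 2) ∨
  ((((range nr).filter fun i => col i = 8).card = 1) ∧
    ((range nr).filter fun i => col i = 1 ∨ col i = 2).card ≤ 2 ∧
    ∀ i < nr, col i ∈ ({0, 1, 2, 8} : Set ℝ))

/-- The row condition of the restricted `{0,1,2,8}` bimatrix conditions. -/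
def ResRow (nc : ℕ) (row : ℕ → ℝ) : Prop :=
  ((∀ j < nc, row j ∈ ({0, 1, 2} : Set ℝ)) ∧
    ((range nc).filter fun j => row j = 1 ∨ row j = 2).card ≤ 3) ∨
  ((((range nc).filter fun j => row j = 8).card = 2) ∧
    ∀ j < nc, row j ∈ ({0, 8} : Set ℝ))

/-- The bimatrix game `(A, B)` of size `m × m` satisfies the restricted `{0,1,2,8}`
conditions. -/
def RestrictedGame (m : ℕ) (A B : ℕ → ℕ → ℝ) : Prop :=
  (∀ j < m, ResCol m (fun i => A i j)) ∧ (∀ i < m, ResCol m (fun j => B i j)) ∧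
  (∀ i < m, ResRow m (fun j => A i j)) ∧ (∀ j < m, ResRow m (fun i => B i j))

/-- The column requirement of a stage 1 game: either (i) at most three non-zero
entries, all in `{1,2}`, with at most one `2`, or (ii) a single entry `4` together
with at most three entries `1` (all remaining entries are `0`). -/
def Stage1Col (nr : ℕ) (col : ℕ → ℝ) : Prop :=
  ((∀ i < nr, col i ∈ ({0, 1, 2} : Set ℝ)) ∧
    ((range nr).filter fun i => col i ≠ 0).card ≤ 3 ∧
    ((range nr).filter fun i => col i = 2).card ≤ 1) ∨
  ((((range nr).filter fun i => col i = 4).card = 1) ∧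
    ((range nr).filter fun i => col i = 1).card ≤ 3 ∧
    ∀ i < nr, col i ∈ ({0, 1, 4} : Set ℝ))

/-- The row requirement of a stage 1 game: either (i) at most three entries `1`, or
(ii) a single `2` with at most one `1`, or (iii) exactly two entries `4` (all
remaining entries are `0`). -/
def Stage1Row (nc : ℕ) (row : ℕ → ℝ) : Prop :=
  ((∀ j < nc, row j = 0 ∨ row j = 1) ∧
    ((range nc).filter fun j => row j = 1).card ≤ 3) ∨
  ((((range nc).filter fun j => row j = 2).card = 1) ∧
    ((range nc).filter fun j => row j = 1).card ≤ 1 ∧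
    ∀ j < nc, row j ∈ ({0, 1, 2} : Set ℝ)) ∨
  ((((range nc).filter fun j => row j = 4).card = 2) ∧
    ∀ j < nc, row j ∈ ({0, 4} : Set ℝ))

lemma filter_range_add (a b : ℕ) (P : ℕ → Prop) [DecidablePred P] :
    ((range (a+b)).filter P).card
      = ((range a).filter P).card + ((range b).filter fun i => P (a+i)).card := by
  rw [range_add, filter_union, card_union_of_disjoint, filter_map, card_map]
  · rfl
  · exact disjoint_filter_filter (by
      simp [Finset.disjoint_left, addLeftEmbedding]; omega)

/-- If `(A, B)` satisfies the restricted `{0,1,2,8}` conditions and the input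
assumptions of the type-one single column simulation with `K = 8`, then `A'`
satisfies the column and row requirements of a stage 1 game. -/
theorem stmt14 (n m k : ℕ) (A B : ℕ → ℕ → ℝ)
    (hres : RestrictedGame m A B)
    (hin : Scs1Input n m m k 8 A B) :
    (∀ c < 2*k+m, Stage1Col (2*k+m) (fun r => scs1A k 8 A r c)) ∧
    (∀ r < 2*k+m, Stage1Row (2*k+m) (fun c => scs1A k 8 A r c)) := by

  classical
  obtain ⟨hColA, hColB, hRowA, hRowB⟩ := hres
  obtain ⟨-, -, hk, -, -, -, -, -, -, h8, hnoK⟩ := hin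
  -- facts about columns j < k of A
  have C1 : ∀ j < k, ((range m).filter fun i => A i j = 8).card = 1 ∧
      ((range m).filter fun i => A i j = 1 ∨ A i j = 2).card ≤ 2 ∧
      (∀ i < m, A i j = 0 ∨ A i j = 1 ∨ A i j = 2 ∨ A i j = 8) := by
    intro j hj
    have h1 := (h8 j hj).1
    have hjm : j < m := lt_of_lt_of_le hj hk
    have hcol := hColA j hjm
    simp only [ResCol] at hcol
    rcases hcol with h | h
    · exfalso
      have hpos : 0 < ((range m).filter fun i => A i j = 8).card := by rw [h1]; norm_num
      obtain ⟨i, hi⟩ := card_pos.mp hpos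
      simp only [mem_filter, mem_range] at hi
      rcases h.1 i hi.1 with h0 | h0 <;> rw [h0] at hi <;> norm_num at hi
    · refine ⟨h1, h.2.1, fun i him => ?_⟩
      have := h.2.2 i him
      simpa [Set.mem_insert_iff] using this
  -- facts about columns j ≥ k of A
  have C2 : ∀ j, k ≤ j → j < m →
      (∀ i < m, A i j = 0 ∨ A i j = 1) ∧
      ((range m).filter fun i => A i j = 1).card ≤ 2 := by
    intro j hkj hjm
    have hcol := hColA j hjm
    simp only [ResCol] at hcol
    rcases hcol with h | h
    · exact ⟨h.1, h.2.2⟩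
    · exfalso
      have hpos : 0 < ((range m).filter fun i => A i j = 8).card := by rw [h.1]; norm_num
      obtain ⟨i, hi⟩ := card_pos.mp hpos
      simp only [mem_filter, mem_range] at hi
      exact hnoK j hkj hjm i hi.1 hi.2
  constructor
  · -- columns
    intro c hc
    simp only [Stage1Col]
    by_cases hc3 : c < 3*k
    · have hjk : c/3 < k := by omega
      obtain ⟨h81, h12, hmem⟩ := C1 (c/3) hjk
      have e_bot : ∀ i, scs1A k 8 A (2*k+i) c =
          (if c % 3 = 0 then (if A i (c/3) = 1 then 1 else 0)
           else if c % 3 = 1 then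
             (if A i (c/3) = 8 then 4 else if A i (c/3) = 2 then 1 else 0)
           else 0) := by
        intro i
        simp only [scs1A, Nat.add_sub_cancel_left]
        rw [if_neg (by omega), if_pos hc3]
        norm_num
      rcases (by omega : c % 3 = 0 ∨ c % 3 = 1 ∨ c % 3 = 2) with h0 | h0 | h0
      · -- c = 3j : column of S-block with the 2, plus the 1-entries of A_j
        have e_top : ∀ r < 2*k, scs1A k 8 A r c = if r = 2*(c/3) then 2 else 0 := by
          intro r hr
          simp only [scs1A, if_pos hr]
          split_ifs <;> first | (exfalso; omega) | norm_num
        have h2jlt : 2*(c/3) < 2*k := by omega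
        refine Or.inl ⟨?_, ?_, ?_⟩
        · intro r hr
          rcases lt_or_ge r (2*k) with hr2 | hr2
          · rw [e_top r hr2]; split_ifs <;> simp
          · obtain ⟨i, rfl⟩ : ∃ i, r = 2*k + i := ⟨r - 2*k, by omega⟩
            rw [e_bot i, if_pos h0]; split_ifs <;> simp
        · rw [filter_range_add]
          have t1 : ((range (2*k)).filter fun r => scs1A k 8 A r c ≠ 0) = {2*(c/3)} := by
            ext r
            simp only [mem_filter, mem_range, mem_singleton]
            constructor
            · rintro ⟨hr, hne⟩
              rw [e_top r hr] at hne
              by_contra hne'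
              rw [if_neg hne'] at hne
              exact hne rfl
            · rintro rfl
              refine ⟨h2jlt, ?_⟩
              rw [e_top _ h2jlt, if_pos rfl]
              norm_num
          have t2 : ((range m).filter fun i => scs1A k 8 A (2*k+i) c ≠ 0).card ≤ 2 := by
            refine le_trans (card_le_card ?_) h12
            intro i hi
            simp only [mem_filter, mem_range] at hi ⊢
            refine ⟨hi.1, ?_⟩
            have hne := hi.2
            rw [e_bot i, if_pos h0] at hne
            by_cases hA : A i (c/3) = 1
            · exact Or.inl hA
            · rw [if_neg hA] at hne; exact absurd rfl hne
          rw [t1, card_singleton]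
          omega
        · rw [filter_range_add]
          have t1 : ((range (2*k)).filter fun r => scs1A k 8 A r c = 2) = {2*(c/3)} := by
            ext r
            simp only [mem_filter, mem_range, mem_singleton]
            constructor
            · rintro ⟨hr, h2⟩
              rw [e_top r hr] at h2
              by_contra hne'
              rw [if_neg hne'] at h2
              norm_num at h2
            · rintro rfl
              exact ⟨h2jlt, by rw [e_top _ h2jlt, if_pos rfl]⟩
          have t2 : ((range m).filter fun i => scs1A k 8 A (2*k+i) c = 2) = ∅ := by
            rw [filter_eq_empty_iff]
            intro i _
            rw [e_bot i, if_pos h0]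
            split_ifs <;> norm_num
          rw [t1, t2, card_singleton, card_empty]
      · -- c = 3j+1 : the 4 from the encoded 8, 1s from the 2s, and the S-block 1
        have e_top : ∀ r < 2*k, scs1A k 8 A r c = if r = 2*(c/3)+1 then 1 else 0 := by
          intro r hr
          simp only [scs1A, if_pos hr]
          split_ifs <;> first | (exfalso; omega) | norm_num
        have h2jlt : 2*(c/3)+1 < 2*k := by omega
        refine Or.inr ⟨?_, ?_, ?_⟩
        · rw [filter_range_add]
          have t1 : ((range (2*k)).filter fun r => scs1A k 8 A r c = 4) = ∅ := by
            rw [filter_eq_empty_iff]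
            intro r hr
            rw [e_top r (mem_range.mp hr)]
            split_ifs <;> norm_num
          have t2 : ((range m).filter fun i => scs1A k 8 A (2*k+i) c = 4)
              = (range m).filter fun i => A i (c/3) = 8 := by
            apply filter_congr
            intro i _
            rw [e_bot i, if_neg (by omega), if_pos h0]
            constructor
            · intro h
              by_contra hA
              rw [if_neg hA] at h
              split_ifs at h <;> norm_num at h
            · intro h
              rw [if_pos h]
          rw [t1, t2, card_empty, h81]
        · rw [filter_range_add]
          have t1 : ((range (2*k)).filter fun r => scs1A k 8 A r c = 1) = {2*(c/3)+1} := by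
            ext r
            simp only [mem_filter, mem_range, mem_singleton]
            constructor
            · rintro ⟨hr, h2⟩
              rw [e_top r hr] at h2
              by_contra hne'
              rw [if_neg hne'] at h2
              norm_num at h2
            · rintro rfl
              exact ⟨h2jlt, by rw [e_top _ h2jlt, if_pos rfl]⟩
          have t2 : ((range m).filter fun i => scs1A k 8 A (2*k+i) c = 1).card ≤ 2 := by
            refine le_trans (card_le_card ?_) h12
            intro i hi
            simp only [mem_filter, mem_range] at hi ⊢
            refine ⟨hi.1, ?_⟩
            have h1 := hi.2
            rw [e_bot i, if_neg (by omega), if_pos h0] at h1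
            split_ifs at h1 <;> first | tauto | norm_num at h1
          rw [t1, card_singleton]
          omega
        · intro r hr
          rcases lt_or_ge r (2*k) with hr2 | hr2
          · rw [e_top r hr2]; split_ifs <;> simp
          · obtain ⟨i, rfl⟩ : ∃ i, r = 2*k + i := ⟨r - 2*k, by omega⟩
            rw [e_bot i, if_neg (by omega), if_pos h0]
            split_ifs <;> simp
      · -- c = 3j+2 : the all-ones 2×1 block
        have e_top : ∀ r < 2*k, scs1A k 8 A r c = if r/2 = c/3 then 1 else 0 := by
          intro r hr
          simp only [scs1A, if_pos hr]
          split_ifs <;> first | (exfalso; omega) | norm_num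
        have e_bot' : ∀ i, scs1A k 8 A (2*k+i) c = 0 := by
          intro i
          rw [e_bot i, if_neg (by omega), if_neg (by omega)]
        refine Or.inl ⟨?_, ?_, ?_⟩
        · intro r hr
          rcases lt_or_ge r (2*k) with hr2 | hr2
          · rw [e_top r hr2]; split_ifs <;> simp
          · obtain ⟨i, rfl⟩ : ∃ i, r = 2*k + i := ⟨r - 2*k, by omega⟩
            rw [e_bot' i]; simp
        · rw [filter_range_add]
          have t1 : ((range (2*k)).filter fun r => scs1A k 8 A r c ≠ 0)
              = {2*(c/3), 2*(c/3)+1} := by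
            ext r
            simp only [mem_filter, mem_range, mem_insert, mem_singleton]
            constructor
            · rintro ⟨hr, hne⟩
              rw [e_top r hr] at hne
              by_cases h' : r/2 = c/3
              · omega
              · rw [if_neg h'] at hne; exact absurd rfl hne
            · intro h
              have hr : r < 2*k := by omega
              refine ⟨hr, ?_⟩
              rw [e_top r hr, if_pos (by omega)]
              norm_num
          have t2 : ((range m).filter fun i => scs1A k 8 A (2*k+i) c ≠ 0) = ∅ := by
            rw [filter_eq_empty_iff]
            intro i _
            rw [e_bot' i]
            simp
          rw [t1, t2, card_empty, card_insert_of_notMem (by simp), card_singleton]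
          norm_num
        · rw [filter_range_add]
          have t1 : ((range (2*k)).filter fun r => scs1A k 8 A r c = 2) = ∅ := by
            rw [filter_eq_empty_iff]
            intro r hr
            rw [e_top r (mem_range.mp hr)]
            split_ifs <;> norm_num
          have t2 : ((range m).filter fun i => scs1A k 8 A (2*k+i) c = 2) = ∅ := by
            rw [filter_eq_empty_iff]
            intro i _
            rw [e_bot' i]
            norm_num
          rw [t1, t2, card_empty]
          norm_num
    · -- c ≥ 3k : a column of A without an 8
      obtain ⟨hent, hcard⟩ := C2 (c - 2*k) (by omega) (by omega)
      have e_top : ∀ r < 2*k, scs1A k 8 A r c = 0 := by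
        intro r hr
        simp only [scs1A, if_pos hr]
        rw [if_neg (by omega), if_neg (by omega), if_neg (by omega)]
      have e_bot : ∀ i, scs1A k 8 A (2*k+i) c = A i (c - 2*k) := by
        intro i
        simp only [scs1A, Nat.add_sub_cancel_left]
        rw [if_neg (by omega), if_neg (by omega)]
      refine Or.inl ⟨?_, ?_, ?_⟩
      · intro r hr
        rcases lt_or_ge r (2*k) with hr2 | hr2
        · rw [e_top r hr2]; simp
        · obtain ⟨i, rfl⟩ : ∃ i, r = 2*k + i := ⟨r - 2*k, by omega⟩
          rw [e_bot i]
          rcases hent i (by omega) with h | h <;> rw [h] <;> simp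
      · rw [filter_range_add]
        have t1 : ((range (2*k)).filter fun r => scs1A k 8 A r c ≠ 0) = ∅ := by
          rw [filter_eq_empty_iff]
          intro r hr
          rw [e_top r (mem_range.mp hr)]
          simp
        have t2 : ((range m).filter fun i => scs1A k 8 A (2*k+i) c ≠ 0).card ≤ 2 := by
          refine le_trans (card_le_card ?_) hcard
          intro i hi
          simp only [mem_filter, mem_range] at hi ⊢
          refine ⟨hi.1, ?_⟩
          have hne := hi.2
          rw [e_bot i] at hne
          rcases hent i hi.1 with h | h
          · exact absurd h hne
          · exact h
        rw [t1, card_empty]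
        omega
      · rw [filter_range_add]
        have t1 : ((range (2*k)).filter fun r => scs1A k 8 A r c = 2) = ∅ := by
          rw [filter_eq_empty_iff]
          intro r hr
          rw [e_top r (mem_range.mp hr)]
          norm_num
        have t2 : ((range m).filter fun i => scs1A k 8 A (2*k+i) c = 2) = ∅ := by
          rw [filter_eq_empty_iff]
          intro i hi
          rw [e_bot i]
          rcases hent i (mem_range.mp hi) with h | h <;> rw [h] <;> norm_num
        rw [t1, t2, card_empty]
        norm_num
  · -- rows
    intro r hr
    simp only [Stage1Row]
    rcases lt_or_ge r (2*k) with hr2 | hr2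
    · -- rows of the S-blocks
      have hjk : r/2 < k := by omega
      have e_row : ∀ c, scs1A k 8 A r c =
          if c = 3*(r/2) then (if r % 2 = 0 then 2 else 0)
          else if c = 3*(r/2)+1 then (if r % 2 = 0 then 0 else 1)
          else if c = 3*(r/2)+2 then 1 else 0 := by
        intro c
        simp only [scs1A, if_pos hr2]
      rcases Nat.mod_two_eq_zero_or_one r with hp | hp
      · -- even row : entries 2, 0, 1
        refine Or.inr (Or.inl ⟨?_, ?_, ?_⟩)
        · have t : ((range (2*k+m)).filter fun c => scs1A k 8 A r c = 2)
              = {3*(r/2)} := by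
            ext c
            simp only [mem_filter, mem_range, mem_singleton]
            constructor
            · rintro ⟨hc, h2⟩
              rw [e_row c, hp] at h2
              split_ifs at h2 <;> first | assumption | (exfalso; omega) | norm_num at h2
            · rintro rfl
              refine ⟨by omega, ?_⟩
              rw [e_row _, if_pos rfl, if_pos hp]
          rw [t, card_singleton]
        · refine le_trans (card_le_card ?_) (le_of_eq (card_singleton (3*(r/2)+2)))
          intro c hcmem
          simp only [mem_filter, mem_range, mem_singleton] at hcmem ⊢
          obtain ⟨hc, h1⟩ := hcmem
          rw [e_row c, hp] at h1
          split_ifs at h1 <;> first | assumption | (exfalso; omega) | norm_num at h1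
        · intro c hc
          rw [e_row c, hp]
          split_ifs <;> simp
      · -- odd row : entries 0, 1, 1
        refine Or.inl ⟨?_, ?_⟩
        · intro c hc
          rw [e_row c, hp]
          split_ifs <;> first | assumption | (exfalso; assumption) | (exfalso; omega) | norm_num | simp
        · refine le_trans (card_le_card (?_ :
              _ ⊆ ({3*(r/2)+1, 3*(r/2)+2} : Finset ℕ))) ?_
          · intro c hcmem
            simp only [mem_filter, mem_range, mem_insert, mem_singleton] at hcmem ⊢
            obtain ⟨hc, h1⟩ := hcmem
            rw [e_row c, hp] at h1
            split_ifs at h1 <;> first | tauto | (exfalso; omega) | norm_num at h1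
          · refine le_trans (card_insert_le _ _) ?_
            rw [card_singleton]
            norm_num
    · -- rows of the encoding block
        obtain ⟨i, rfl⟩ : ∃ i, r = 2*k + i := ⟨r - 2*k, by omega⟩
        have him : i < m := by omega
        have e_bot : ∀ c, scs1A k 8 A (2*k+i) c =
            if c < 3*k then
              (if c % 3 = 0 then (if A i (c/3) = 1 then 1 else 0)
               else if c % 3 = 1 then
                 (if A i (c/3) = 8 then 4 else if A i (c/3) = 2 then 1 else 0)
               else 0)
            else A i (c - 2*k) := by
          intro c
          simp only [scs1A, Nat.add_sub_cancel_left]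
          rw [if_neg (by omega)]
          norm_num
        have key : ∀ c, c < 3*k → scs1A k 8 A (2*k+i) c = 1 →
            (c % 3 = 0 ∧ A i (c/3) = 1) ∨ (c % 3 = 1 ∧ A i (c/3) = 2) := by
          intro c h3 h1
          rw [e_bot c, if_pos h3] at h1
          split_ifs at h1 <;> first | tauto | norm_num at h1
        have hrow0 := hRowA i him
        simp only [ResRow] at hrow0
        rcases hrow0 with hrow | hrow
        · -- row of A with entries in {0,1,2}
          have hmem' : ∀ j < m, A i j = 0 ∨ A i j = 1 ∨ A i j = 2 := by
            intro j hj
            simpa [Set.mem_insert_iff] using hrow.1 j hj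
          refine Or.inl ⟨?_, ?_⟩
          · intro c hc
            rw [e_bot c]
            by_cases h3 : c < 3*k
            · rw [if_pos h3]
              have hc3m : c/3 < m := by omega
              rcases (by omega : c % 3 = 0 ∨ c % 3 = 1 ∨ c % 3 = 2) with h0 | h0 | h0
              · rw [if_pos h0]; split_ifs <;> norm_num
              · rw [if_neg (by omega), if_pos h0]
                have h8' : A i (c/3) ≠ 8 := by
                  rcases hmem' (c/3) hc3m with h | h | h <;> rw [h] <;> norm_num
                rw [if_neg h8']
                split_ifs <;> norm_num
              · rw [if_neg (by omega), if_neg (by omega)]; norm_num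
            · rw [if_neg h3]
              have := (C2 (c-2*k) (by omega) (by omega)).1 i him
              tauto
          · refine le_trans (Finset.card_le_card_of_injOn
              (fun c => if c < 3*k then c/3 else c - 2*k) ?_ ?_) hrow.2
            · intro c hcm
              simp only [mem_coe, mem_filter, mem_range] at hcm ⊢
              obtain ⟨hc, h1⟩ := hcm
              by_cases h3 : c < 3*k
              · rcases key c h3 h1 with ⟨h0, hA⟩ | ⟨h0, hA⟩
                · simp only [if_pos h3, mem_filter, mem_range]
                  exact ⟨by omega, Or.inl hA⟩
                · simp only [if_pos h3, mem_filter, mem_range]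
                  exact ⟨by omega, Or.inr hA⟩
              · have hA : A i (c - 2*k) = 1 := by
                  rw [e_bot c, if_neg h3] at h1; exact h1
                simp only [if_neg h3, mem_filter, mem_range]
                exact ⟨by omega, Or.inl hA⟩
            · intro c1 hc1 c2 hc2 heq
              simp only [coe_filter, Set.mem_setOf_eq, mem_range] at hc1 hc2
              obtain ⟨hc1n, h11⟩ := hc1
              obtain ⟨hc2n, h12⟩ := hc2
              by_cases h31 : c1 < 3*k <;> by_cases h32 : c2 < 3*k
              · simp only [if_pos h31, if_pos h32] at heq
                rcases key c1 h31 h11 with ⟨m1, a1⟩ | ⟨m1, a1⟩ <;>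
                  rcases key c2 h32 h12 with ⟨m2, a2⟩ | ⟨m2, a2⟩
                · omega
                · exfalso; rw [heq] at a1; rw [a1] at a2; norm_num at a2
                · exfalso; rw [heq] at a1; rw [a1] at a2; norm_num at a2
                · omega
              · simp only [if_pos h31, if_neg h32] at heq; exfalso; omega
              · simp only [if_neg h31, if_pos h32] at heq; exfalso; omega
              · simp only [if_neg h31, if_neg h32] at heq; omega
        · -- row of A with two 8s
          have hmem8 : ∀ j < m, A i j = 0 ∨ A i j = 8 := by
            intro j hj
            simpa [Set.mem_insert_iff] using hrow.2 j hj
          refine Or.inr (Or.inr ⟨?_, ?_⟩)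
          · have himg : ((range (2*k+m)).filter fun c => scs1A k 8 A (2*k+i) c = 4)
                = ((range m).filter fun j => A i j = 8).image (fun j => 3*j+1) := by
              ext c
              simp only [mem_filter, mem_range, mem_image]
              constructor
              · rintro ⟨hc, h4⟩
                rw [e_bot c] at h4
                by_cases h3 : c < 3*k
                · rw [if_pos h3] at h4
                  have hc3m : c / 3 < m := by omega
                  refine ⟨c/3, ⟨hc3m, ?_⟩, ?_⟩
                  · split_ifs at h4 <;> first | assumption | norm_num at h4
                  · split_ifs at h4 <;> first | omega | norm_num at h4
                · rw [if_neg h3] at h4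
                  exfalso
                  rcases hmem8 (c-2*k) (by omega) with h | h <;>
                    rw [h] at h4 <;> norm_num at h4
              · rintro ⟨jj, ⟨hjm, hA⟩, rfl⟩
                have hjk : jj < k := by
                  by_contra h
                  exact hnoK jj (by omega) hjm i him hA
                refine ⟨by omega, ?_⟩
                rw [e_bot _, if_pos (by omega), if_neg (by omega), if_pos (by omega),
                  show (3*jj+1)/3 = jj by omega, if_pos hA]
            rw [himg, card_image_of_injOn (by intro a _ b _ h; simp only [add_left_inj, Nat.mul_left_cancel_iff] at h; omega), hrow.1]
          · intro c hc
            rw [e_bot c]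
            by_cases h3 : c < 3*k
            · rw [if_pos h3]
              have hc3m : c/3 < m := by omega
              have hA1 : A i (c/3) ≠ 1 := by
                rcases hmem8 (c/3) hc3m with h | h <;> rw [h] <;> norm_num
              have hA2 : A i (c/3) ≠ 2 := by
                rcases hmem8 (c/3) hc3m with h | h <;> rw [h] <;> norm_num
              rcases (by omega : c % 3 = 0 ∨ c % 3 = 1 ∨ c % 3 = 2) with h0 | h0 | h0
              · rw [if_pos h0, if_neg hA1]; simp
              · rw [if_neg (by omega), if_pos h0]
                by_cases h8' : A i (c/3) = 8
                · rw [if_pos h8']; simp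
                · rw [if_neg h8', if_neg hA2]; simp
              · rw [if_neg (by omega), if_neg (by omega)]; simp
            · rw [if_neg h3]
              have hne8 : A i (c - 2*k) ≠ 8 := hnoK (c-2*k) (by omega) (by omega) i him
              rcases hmem8 (c-2*k) (by omega) with h | h
              · rw [h]; simp
              · exact absurd h hne8
end

section
/- Let (A,B) be a stage 1 game (satisfying the input assumptions of the type-one single column simulation), and let (A′,B′) be produced by the type-one single column simulation with K = 4. Then A′ satisfies the column and row requirements of a stage 2 game: every column of A′ contains at most four non-zero entries, all in {1,2}, with at most one 2; every row of A′ contains either at most three entries 1, or a single entry 2 together with at most one entry 1, or exactly two entries 2 (all other entries 0); and whenever a row of A′ contains exactly two entries 2, each of those 2s shares its column with exactly one entry 1. -/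
open Finset
open scoped Classical

/-- `(A, B)` (with `nr` rows and `nc` columns) is a stage 1 game: every column of
`A` and of `Bᵀ` satisfies the stage 1 column requirement and every row of `A` and
of `Bᵀ` satisfies the stage 1 row requirement. -/
def Stage1Game (nr nc : ℕ) (A B : ℕ → ℕ → ℝ) : Prop :=
  (∀ j < nc, Stage1Col nr (fun i => A i j)) ∧
  (∀ i < nr, Stage1Row nc (fun j => A i j)) ∧
  (∀ i < nr, Stage1Col nc (fun j => B i j)) ∧
  (∀ j < nc, Stage1Row nr (fun i => B i j))

/-- The column requirement of a stage 2 game: at most four non-zero entries, all in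
`{1,2}`, with at most one `2`. -/
def Stage2Col (nr : ℕ) (col : ℕ → ℝ) : Prop :=
  (∀ i < nr, col i ∈ ({0, 1, 2} : Set ℝ)) ∧
  ((range nr).filter fun i => col i ≠ 0).card ≤ 4 ∧
  ((range nr).filter fun i => col i = 2).card ≤ 1

/-- The row requirement of a stage 2 game: either (i) at most three entries `1`,
or (ii) a single `2` with at most one `1`, or (iii) exactly two entries `2` (all
remaining entries are `0`). -/
def Stage2Row (nc : ℕ) (row : ℕ → ℝ) : Prop :=
  ((∀ j < nc, row j = 0 ∨ row j = 1) ∧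
    ((range nc).filter fun j => row j = 1).card ≤ 3) ∨
  ((((range nc).filter fun j => row j = 2).card = 1) ∧
    ((range nc).filter fun j => row j = 1).card ≤ 1 ∧
    ∀ j < nc, row j ∈ ({0, 1, 2} : Set ℝ)) ∨
  ((((range nc).filter fun j => row j = 2).card = 2) ∧
    ∀ j < nc, row j ∈ ({0, 2} : Set ℝ))

lemma card_filter_range_add (m n : ℕ) (p : ℕ → Prop) [DecidablePred p] :
    ((range (m+n)).filter p).card
      = ((range m).filter p).card + ((range n).filter (fun i => p (m+i))).card := by
  simp only [Finset.card_filter]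
  induction n with
  | zero => simp
  | succ n ih => rw [show m + (n+1) = (m+n)+1 from rfl, Finset.sum_range_succ,
      Finset.sum_range_succ, ih]; ring

lemma card_filter_range_triple (p : ℕ → Prop) [DecidablePred p] (k : ℕ) :
    ((range (3*k)).filter p).card
      = ((range k).filter (fun j => p (3*j))).card
        + ((range k).filter (fun j => p (3*j+1))).card
        + ((range k).filter (fun j => p (3*j+2))).card := by
  simp only [Finset.card_filter]
  induction k with
  | zero => simp
  | succ k ih =>
    rw [show 3*(k+1) = 3*k+1+1+1 by ring, Finset.sum_range_succ, Finset.sum_range_succ,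
      Finset.sum_range_succ, ih, Finset.sum_range_succ, Finset.sum_range_succ,
      Finset.sum_range_succ]
    ring

/-- If `(A, B)` is a stage 1 game satisfying the input assumptions of the type-one
single column simulation with `K = 4`, then `A'` satisfies the column and row
requirements of a stage 2 game, and whenever a row of `A'` contains exactly two
entries `2`, each of those `2`s shares its column with exactly one entry `1`. -/
theorem stmt15 (n nr nc k : ℕ) (A B : ℕ → ℕ → ℝ)
    (hstage1 : Stage1Game nr nc A B)
    (hin : Scs1Input n nr nc k 4 A B) :
    (∀ c < 2*k+nc, Stage2Col (2*k+nr) (fun r => scs1A k 4 A r c)) ∧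
    (∀ r < 2*k+nr, Stage2Row (2*k+nc) (fun c => scs1A k 4 A r c)) ∧
    (∀ r < 2*k+nr,
      ((range (2*k+nc)).filter fun c => scs1A k 4 A r c = 2).card = 2 →
      ∀ c < 2*k+nc, scs1A k 4 A r c = 2 →
        ((range (2*k+nr)).filter fun r' => scs1A k 4 A r' c = 1).card = 1) := by
  classical
  obtain ⟨hS1, hS2, -, -⟩ := hstage1
  obtain ⟨-, -, hknc, -, -, -, -, -, -, hcolK, hnoK⟩ := hin
  have topval : ∀ r < 2*k, ∀ c', scs1A k 4 A r c' =
      (if c' = 3*(r/2) then (if r % 2 = 0 then 2 else 0)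
       else if c' = 3*(r/2)+1 then (if r % 2 = 0 then 0 else 1)
       else if c' = 3*(r/2)+2 then 1 else 0) := by
    intro r hr c'; simp only [scs1A, if_pos hr]
  have htopzero : ∀ r < 2*k, ∀ c', 3*k ≤ c' → scs1A k 4 A r c' = 0 := by
    intro r hr c' hc'
    rw [topval r hr, if_neg (by omega), if_neg (by omega), if_neg (by omega)]
  have encval : ∀ i, ∀ c' < 3*k, scs1A k 4 A (2*k+i) c' =
      (if c' % 3 = 0 then (if A i (c'/3) = 1 then 1 else 0)
       else if c' % 3 = 1 then (if A i (c'/3) = 4 then 2 else if A i (c'/3) = 2 then 1 else 0)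
       else 0) := by
    intro i c' hc'
    simp only [scs1A, if_neg (show ¬ 2*k+i < 2*k by omega), if_pos hc',
      show 2*k+i-2*k = i by omega]
    norm_num
  have encge : ∀ i c', 3*k ≤ c' → scs1A k 4 A (2*k+i) c' = A i (c'-2*k) := by
    intro i c' hc'
    simp only [scs1A, if_neg (show ¬ 2*k+i < 2*k by omega), if_neg (show ¬ c' < 3*k by omega),
      show 2*k+i-2*k = i by omega]
  have hA4card : ∀ j < k, ((range nr).filter fun i => A i j = 4).card = 1 :=
    fun j hj => (hcolK j hj).1
  have hA4ex : ∀ j < k, ∃ i < nr, A i j = 4 := by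
    intro j hj
    have h := hA4card j hj
    obtain ⟨a, ha⟩ := Finset.card_pos.mp (by rw [h]; norm_num)
    simp only [mem_filter, mem_range] at ha
    exact ⟨a, ha.1, ha.2⟩
  have hno2 : ∀ j < k, ∀ i < nr, A i j ≠ 2 := by
    intro j hj i hi h2
    obtain ⟨i0, hi0, hA0⟩ := hA4ex j hj
    rcases hS1 j (by omega) with ⟨hm, -, -⟩ | ⟨-, -, hm⟩
    · have := hm i0 hi0
      simp only [Set.mem_insert_iff, Set.mem_singleton_iff, hA0] at this; norm_num at this
    · have := hm i hi
      simp only [Set.mem_insert_iff, Set.mem_singleton_iff, h2] at this; norm_num at this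
  have hA1card : ∀ j < k, ((range nr).filter fun i => A i j = 1).card ≤ 3 := by
    intro j hj
    rcases (hcolK j hj).2.2 with h | h
    · calc ((range nr).filter fun i => A i j = 1).card
          ≤ ((range nr).filter fun i => A i j = 1 ∨ A i j = 2).card :=
            Finset.card_le_card (by
              intro x hx
              simp only [mem_filter] at hx ⊢
              exact ⟨hx.1, Or.inl hx.2⟩)
        _ ≤ 2 := h
        _ ≤ 3 := by norm_num
    · exact h.1
  have v0 : ∀ i, ∀ j < k, scs1A k 4 A (2*k+i) (3*j) = (if A i j = 1 then 1 else 0) := by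
    intro i j hj
    rw [encval i (3*j) (by omega), if_pos (by omega), show (3*j)/3 = j by omega]
  have v1 : ∀ i, ∀ j < k, scs1A k 4 A (2*k+i) (3*j+1)
      = (if A i j = 4 then 2 else if A i j = 2 then 1 else 0) := by
    intro i j hj
    rw [encval i (3*j+1) (by omega), if_neg (by omega), if_pos (by omega),
      show (3*j+1)/3 = j by omega]
  have v2 : ∀ i, ∀ j < k, scs1A k 4 A (2*k+i) (3*j+2) = 0 := by
    intro i j hj
    rw [encval i (3*j+2) (by omega), if_neg (by omega), if_neg (by omega)]
  have vg : ∀ i t, scs1A k 4 A (2*k+i) (3*k+t) = A i (k+t) := by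
    intro i t
    rw [encge i (3*k+t) (by omega), show 3*k+t-2*k = k+t by omega]
  have E0one : ∀ i, ((range k).filter fun j => scs1A k 4 A (2*k+i) (3*j) = 1)
      = ((range k).filter fun j => A i j = 1) := by
    intro i
    apply Finset.filter_congr
    intro j hj
    rw [mem_range] at hj
    rw [v0 i j hj]
    split_ifs with h <;> simp [h]
  have E0two : ∀ i, ((range k).filter fun j => scs1A k 4 A (2*k+i) (3*j) = 2) = ∅ := by
    intro i
    rw [Finset.eq_empty_iff_forall_notMem]
    intro j
    simp only [mem_filter, mem_range, not_and]
    intro hj hp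
    rw [v0 i j hj] at hp
    split_ifs at hp <;> norm_num at hp
  have E1two : ∀ i, ((range k).filter fun j => scs1A k 4 A (2*k+i) (3*j+1) = 2)
      = ((range k).filter fun j => A i j = 4) := by
    intro i
    apply Finset.filter_congr
    intro j hj
    rw [mem_range] at hj
    rw [v1 i j hj]
    split_ifs with h h'
    · simp [h]
    · norm_num [h]
    · norm_num [h]
  have E2z : ∀ i (v : ℝ), v ≠ 0 →
      ((range k).filter fun j => scs1A k 4 A (2*k+i) (3*j+2) = v) = ∅ := by
    intro i v hv
    rw [Finset.eq_empty_iff_forall_notMem]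
    intro j
    simp only [mem_filter, mem_range, not_and]
    intro hj hp
    rw [v2 i j hj] at hp
    exact hv hp.symm
  have EGone : ∀ i, ((range (nc-k)).filter fun t => scs1A k 4 A (2*k+i) (3*k+t) = 1)
      = ((range (nc-k)).filter fun t => A i (k+t) = 1) := by
    intro i
    apply Finset.filter_congr
    intro t _
    rw [vg i t]
  have EGtwo : ∀ i, ((range (nc-k)).filter fun t => scs1A k 4 A (2*k+i) (3*k+t) = 2)
      = ((range (nc-k)).filter fun t => A i (k+t) = 2) := by
    intro i
    apply Finset.filter_congr
    intro t _
    rw [vg i t]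
  have part1 : ∀ c < 2*k+nc, Stage2Col (2*k+nr) (fun r => scs1A k 4 A r c) := by
    intro c hc
    by_cases hc3 : c < 3*k
    · have hjk : c/3 < k := by omega
      have hjnc : c/3 < nc := by omega
      have hmemc : ∀ r < 2*k+nr, scs1A k 4 A r c ∈ ({0,1,2} : Set ℝ) := by
        intro r hr
        rcases lt_or_ge r (2*k) with h | h
        · rw [topval r h]; split_ifs <;> simp
        · have := encval (r-2*k) c hc3
          rw [show 2*k+(r-2*k) = r by omega] at this
          rw [this]; split_ifs <;> simp
      rcases (show c % 3 = 0 ∨ c % 3 = 1 ∨ c % 3 = 2 by omega) with hs | hs | hs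
      · -- s = 0
        have htopA : ((range (2*k)).filter fun r => scs1A k 4 A r c ≠ 0) = {2*(c/3)} := by
          ext r
          simp only [mem_filter, mem_range, mem_singleton]
          constructor
          · rintro ⟨hr, hp⟩
            rw [topval r hr] at hp
            split_ifs at hp with h1 h2 h3 h4 h5
            all_goals first | exact absurd rfl hp | omega
          · rintro rfl
            refine ⟨by omega, ?_⟩
            rw [topval _ (by omega), if_pos (show c = 3*((2*(c/3))/2) by omega),
              if_pos (show (2*(c/3)) % 2 = 0 by omega)]
            norm_num
        have htopB : ((range (2*k)).filter fun r => scs1A k 4 A r c = 2) = {2*(c/3)} := by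
          ext r
          simp only [mem_filter, mem_range, mem_singleton]
          constructor
          · rintro ⟨hr, hp⟩
            rw [topval r hr] at hp
            split_ifs at hp with h1 h2 h3 h4 h5
            all_goals first | omega | norm_num at hp
          · rintro rfl
            refine ⟨by omega, ?_⟩
            rw [topval _ (by omega), if_pos (show c = 3*((2*(c/3))/2) by omega),
              if_pos (show (2*(c/3)) % 2 = 0 by omega)]
        have hencA : ((range nr).filter fun i => scs1A k 4 A (2*k+i) c ≠ 0)
            = ((range nr).filter fun i => A i (c/3) = 1) := by
          apply Finset.filter_congr
          intro i hi
          rw [encval i c hc3, if_pos hs]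
          split_ifs with h1 <;> simp [h1]
        have hencB : ((range nr).filter fun i => scs1A k 4 A (2*k+i) c = 2) = ∅ := by
          rw [Finset.eq_empty_iff_forall_notMem]
          intro i
          simp only [mem_filter, mem_range, not_and]
          intro hi hp
          rw [encval i c hc3, if_pos hs] at hp
          split_ifs at hp <;> norm_num at hp
        refine ⟨hmemc, ?_, ?_⟩
        · rw [card_filter_range_add]
          beta_reduce
          rw [htopA, hencA, card_singleton]
          have := hA1card (c/3) hjk
          omega
        · rw [card_filter_range_add]
          beta_reduce
          rw [htopB, hencB, card_singleton, card_empty]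
      · -- s = 1
        have htopA : ((range (2*k)).filter fun r => scs1A k 4 A r c ≠ 0) = {2*(c/3)+1} := by
          ext r
          simp only [mem_filter, mem_range, mem_singleton]
          constructor
          · rintro ⟨hr, hp⟩
            rw [topval r hr] at hp
            split_ifs at hp with h1 h2 h3 h4 h5
            all_goals first | exact absurd rfl hp | omega
          · rintro rfl
            refine ⟨by omega, ?_⟩
            rw [topval _ (by omega), if_neg (by omega),
              if_pos (show c = 3*((2*(c/3)+1)/2)+1 by omega),
              if_neg (show ¬ (2*(c/3)+1) % 2 = 0 by omega)]
            norm_num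
        have htopB : ((range (2*k)).filter fun r => scs1A k 4 A r c = 2) = ∅ := by
          rw [Finset.eq_empty_iff_forall_notMem]
          intro r
          simp only [mem_filter, mem_range, not_and]
          intro hr hp
          rw [topval r hr] at hp
          split_ifs at hp <;> first | omega | norm_num at hp
        have hencA : ((range nr).filter fun i => scs1A k 4 A (2*k+i) c ≠ 0)
            = ((range nr).filter fun i => A i (c/3) = 4) := by
          apply Finset.filter_congr
          intro i hi
          rw [mem_range] at hi
          rw [encval i c hc3, if_neg (by omega), if_pos hs]
          split_ifs with h1 h2
          · simp [h1]
          · exact absurd h2 (hno2 (c/3) hjk i hi)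
          · simp [h1]
        have hencB : ((range nr).filter fun i => scs1A k 4 A (2*k+i) c = 2)
            = ((range nr).filter fun i => A i (c/3) = 4) := by
          apply Finset.filter_congr
          intro i hi
          rw [mem_range] at hi
          rw [encval i c hc3, if_neg (by omega), if_pos hs]
          split_ifs with h1 h2
          · simp [h1]
          · exact absurd h2 (hno2 (c/3) hjk i hi)
          · norm_num [h1]
        refine ⟨hmemc, ?_, ?_⟩
        · rw [card_filter_range_add]
          beta_reduce
          rw [htopA, hencA, card_singleton]
          have := hA4card (c/3) hjk
          omega
        · rw [card_filter_range_add]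
          beta_reduce
          rw [htopB, hencB, card_empty]
          have := hA4card (c/3) hjk
          omega
      · -- s = 2
        have htopA : ((range (2*k)).filter fun r => scs1A k 4 A r c ≠ 0)
            = {2*(c/3), 2*(c/3)+1} := by
          ext r
          simp only [mem_filter, mem_range, mem_insert, mem_singleton]
          constructor
          · rintro ⟨hr, hp⟩
            rw [topval r hr] at hp
            split_ifs at hp with h1 h2 h3 h4 h5
            all_goals first | exact absurd rfl hp | omega
          · rintro (rfl | rfl)
            · refine ⟨by omega, ?_⟩
              rw [topval _ (by omega), if_neg (by omega), if_neg (by omega),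
                if_pos (show c = 3*((2*(c/3))/2)+2 by omega)]
              norm_num
            · refine ⟨by omega, ?_⟩
              rw [topval _ (by omega), if_neg (by omega), if_neg (by omega),
                if_pos (show c = 3*((2*(c/3)+1)/2)+2 by omega)]
              norm_num
        have htopB : ((range (2*k)).filter fun r => scs1A k 4 A r c = 2) = ∅ := by
          rw [Finset.eq_empty_iff_forall_notMem]
          intro r
          simp only [mem_filter, mem_range, not_and]
          intro hr hp
          rw [topval r hr] at hp
          split_ifs at hp <;> first | omega | norm_num at hp
        have hencz : ∀ v : ℝ, v ≠ 0 →
            ((range nr).filter fun i => scs1A k 4 A (2*k+i) c = v) = ∅ := by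
          intro v hv
          rw [Finset.eq_empty_iff_forall_notMem]
          intro i
          simp only [mem_filter, mem_range, not_and]
          intro hi hp
          rw [encval i c hc3, if_neg (by omega), if_neg (by omega)] at hp
          exact hv hp.symm
        have hencA : ((range nr).filter fun i => scs1A k 4 A (2*k+i) c ≠ 0) = ∅ := by
          rw [Finset.eq_empty_iff_forall_notMem]
          intro i
          simp only [mem_filter, mem_range, not_and]
          intro hi hp
          rw [encval i c hc3, if_neg (by omega), if_neg (by omega)] at hp
          exact hp rfl
        refine ⟨hmemc, ?_, ?_⟩
        · rw [card_filter_range_add]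
          beta_reduce
          rw [htopA, hencA, card_empty]
          have : ({2*(c/3), 2*(c/3)+1} : Finset ℕ).card ≤ 2 := card_insert_le _ _ |>.trans (by simp)
          omega
        · rw [card_filter_range_add]
          beta_reduce
          rw [htopB, hencz 2 (by norm_num), card_empty]
          omega
    · -- c ≥ 3k
      have hck : k ≤ c - 2*k := by omega
      have hcnc : c - 2*k < nc := by omega
      have htopz : ∀ v : ℝ, v ≠ 0 →
          ((range (2*k)).filter fun r => scs1A k 4 A r c = v) = ∅ := by
        intro v hv
        rw [Finset.eq_empty_iff_forall_notMem]
        intro r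
        simp only [mem_filter, mem_range, not_and]
        intro hr hp
        rw [htopzero r hr c (by omega)] at hp
        exact hv hp.symm
      have htopA : ((range (2*k)).filter fun r => scs1A k 4 A r c ≠ 0) = ∅ := by
        rw [Finset.eq_empty_iff_forall_notMem]
        intro r
        simp only [mem_filter, mem_range, not_and]
        intro hr hp
        exact hp (htopzero r hr c (by omega))
      have hencvA : ((range nr).filter fun i => scs1A k 4 A (2*k+i) c ≠ 0)
          = ((range nr).filter fun i => A i (c-2*k) ≠ 0) :=
        Finset.filter_congr (by intro i hi; rw [encge i c (by omega)])
      have hencvB : ((range nr).filter fun i => scs1A k 4 A (2*k+i) c = 2)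
          = ((range nr).filter fun i => A i (c-2*k) = 2) :=
        Finset.filter_congr (by intro i hi; rw [encge i c (by omega)])
      rcases hS1 (c-2*k) hcnc with ⟨hm, h3, h2⟩ | ⟨h4, -, -⟩
      · beta_reduce at h3 h2
        refine ⟨?_, ?_, ?_⟩
        · intro r hr
          beta_reduce
          rcases lt_or_ge r (2*k) with h | h
          · rw [htopzero r h c (by omega)]; simp
          · have := encge (r-2*k) c (by omega)
            rw [show 2*k+(r-2*k) = r by omega] at this
            rw [this]
            exact hm (r-2*k) (by omega)
        · rw [card_filter_range_add]
          beta_reduce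
          rw [htopA, hencvA, card_empty]
          omega
        · rw [card_filter_range_add]
          beta_reduce
          rw [htopz 2 (by norm_num), hencvB, card_empty]
          omega
      · exfalso
        obtain ⟨a, ha⟩ := Finset.card_pos.mp (by rw [h4]; norm_num)
        simp only [mem_filter, mem_range] at ha
        exact hnoK (c-2*k) hck hcnc a ha.1 ha.2
  have part2 : ∀ r < 2*k+nr, Stage2Row (2*k+nc) (fun c => scs1A k 4 A r c) := by
    intro r hr
    rcases lt_or_ge r (2*k) with htop | hge
    · rcases (show r % 2 = 0 ∨ r % 2 = 1 by omega) with hpar | hpar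
      · right; left
        refine ⟨?_, ?_, ?_⟩
        · beta_reduce
          have hfe : ((range (2*k+nc)).filter fun c => scs1A k 4 A r c = 2) = {3*(r/2)} := by
            ext c
            simp only [mem_filter, mem_range, mem_singleton]
            constructor
            · rintro ⟨hc, hp⟩
              rw [topval r htop] at hp
              split_ifs at hp <;> first | omega | norm_num at hp
            · rintro rfl
              refine ⟨by omega, ?_⟩
              rw [topval r htop, if_pos rfl, if_pos hpar]
          rw [hfe, card_singleton]
        · beta_reduce
          have hfe : ((range (2*k+nc)).filter fun c => scs1A k 4 A r c = 1) = {3*(r/2)+2} := by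
            ext c
            simp only [mem_filter, mem_range, mem_singleton]
            constructor
            · rintro ⟨hc, hp⟩
              rw [topval r htop] at hp
              split_ifs at hp <;> first | omega | norm_num at hp
            · rintro rfl
              refine ⟨by omega, ?_⟩
              rw [topval r htop, if_neg (by omega), if_neg (by omega), if_pos rfl]
          rw [hfe, card_singleton]
        · intro c hc
          beta_reduce
          rw [topval r htop]
          split_ifs <;> simp
      · left
        constructor
        · intro c hc
          beta_reduce
          rw [topval r htop, hpar]
          split_ifs <;> first | contradiction | norm_num
        · beta_reduce
          have hsub : ((range (2*k+nc)).filter fun c => scs1A k 4 A r c = 1)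
              ⊆ {3*(r/2)+1, 3*(r/2)+2} := by
            intro c hcm
            simp only [mem_filter, mem_range] at hcm
            obtain ⟨hc, hp⟩ := hcm
            simp only [mem_insert, mem_singleton]
            rw [topval r htop] at hp
            split_ifs at hp <;> first | omega | norm_num at hp
          have h1 := Finset.card_le_card hsub
          have h2 : ({3*(r/2)+1, 3*(r/2)+2} : Finset ℕ).card ≤ 2 :=
            (Finset.card_insert_le _ _).trans (by simp)
          omega
    · obtain ⟨i, rfl⟩ : ∃ i, r = 2*k + i := ⟨r - 2*k, by omega⟩
      have hi : i < nr := by omega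
      rcases hS2 i hi with ⟨hm, hc1⟩ | ⟨hc2, hc1, hm⟩ | ⟨hc4, hm⟩
      · -- row case (i)
        beta_reduce at hm hc1
        left
        constructor
        · intro c hc
          beta_reduce
          rcases lt_or_ge c (3*k) with h | h
          · rcases (show c%3=0 ∨ c%3=1 ∨ c%3=2 by omega) with hs|hs|hs
            · rw [encval i c h, if_pos hs]
              split_ifs <;> norm_num
            · rw [encval i c h, if_neg (by omega), if_pos hs]
              rcases hm (c/3) (by omega) with h1|h1 <;> rw [h1] <;> norm_num
            · rw [encval i c h, if_neg (by omega), if_neg (by omega)]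
              norm_num
          · have hv := vg i (c-3*k)
            rw [show 3*k+(c-3*k) = c by omega] at hv
            rw [hv]
            exact hm (k+(c-3*k)) (by omega)
        · have E1 : ((range k).filter fun j => scs1A k 4 A (2*k+i) (3*j+1) = 1) = ∅ := by
            rw [Finset.eq_empty_iff_forall_notMem]
            intro j
            simp only [mem_filter, mem_range, not_and]
            intro hj hp
            rw [v1 i j hj] at hp
            rcases hm j (by omega) with h1|h1 <;> rw [h1] at hp <;> norm_num at hp
          beta_reduce
          rw [show 2*k+nc = 3*k+(nc-k) by omega, card_filter_range_add,
            card_filter_range_triple]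
          beta_reduce
          rw [E0one i, E1, E2z i 1 (by norm_num), EGone i, card_empty]
          rw [show nc = k+(nc-k) by omega, card_filter_range_add] at hc1
          beta_reduce at hc1
          omega
      · -- row case (ii)
        beta_reduce at hc2 hc1 hm
        have h4m : ∀ j < nc, A i j ≠ 4 := by
          intro j hj h
          have := hm j hj
          rw [h] at this
          simp only [Set.mem_insert_iff, Set.mem_singleton_iff] at this
          norm_num at this
        have E1one : ((range k).filter fun j => scs1A k 4 A (2*k+i) (3*j+1) = 1)
            = ((range k).filter fun j => A i j = 2) := by
          apply Finset.filter_congr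
          intro j hj
          rw [mem_range] at hj
          rw [v1 i j hj, if_neg (h4m j (by omega))]
          split_ifs with h <;> simp [h]
        have hA4z : ((range k).filter fun j => A i j = 4) = ∅ := by
          rw [Finset.eq_empty_iff_forall_notMem]
          intro j
          simp only [mem_filter, mem_range, not_and]
          intro hj h
          exact h4m j (by omega) h
        rw [show nc = k+(nc-k) by omega, card_filter_range_add] at hc2 hc1
        beta_reduce at hc2 hc1
        rcases (show ((range (nc-k)).filter fun t => A i (k+t) = 2).card = 0 ∨
            ((range (nc-k)).filter fun t => A i (k+t) = 2).card = 1 by omega) with hb | hb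
        · -- the 2 of the A-row sits in a column < k
          have hb0 : ∀ t < nc-k, A i (k+t) ≠ 2 := by
            intro t ht h
            have hmem : t ∈ (range (nc-k)).filter fun t => A i (k+t) = 2 := by
              simp only [mem_filter, mem_range]
              exact ⟨ht, h⟩
            rw [Finset.card_eq_zero] at hb
            rw [hb] at hmem
            exact notMem_empty t hmem
          left
          constructor
          · intro c hc
            beta_reduce
            rcases lt_or_ge c (3*k) with h | h
            · rcases (show c%3=0 ∨ c%3=1 ∨ c%3=2 by omega) with hs|hs|hs
              · rw [encval i c h, if_pos hs]
                split_ifs <;> norm_num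
              · rw [encval i c h, if_neg (by omega), if_pos hs,
                  if_neg (h4m (c/3) (by omega))]
                split_ifs <;> norm_num
              · rw [encval i c h, if_neg (by omega), if_neg (by omega)]
                norm_num
            · have hv := vg i (c-3*k)
              rw [show 3*k+(c-3*k) = c by omega] at hv
              rw [hv]
              have hmm := hm (k+(c-3*k)) (by omega)
              simp only [Set.mem_insert_iff, Set.mem_singleton_iff] at hmm
              rcases hmm with h1|h1|h1
              · exact Or.inl h1
              · exact Or.inr h1
              · exact absurd h1 (hb0 (c-3*k) (by omega))
          · beta_reduce
            rw [show 2*k+nc = 3*k+(nc-k) by omega, card_filter_range_add,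
              card_filter_range_triple]
            beta_reduce
            rw [E0one i, E1one, E2z i 1 (by norm_num), EGone i, card_empty]
            omega
        · -- the 2 of the A-row sits in a column ≥ k
          right; left
          refine ⟨?_, ?_, ?_⟩
          · beta_reduce
            rw [show 2*k+nc = 3*k+(nc-k) by omega, card_filter_range_add,
              card_filter_range_triple]
            beta_reduce
            rw [E0two i, E1two i, hA4z, E2z i 2 (by norm_num), EGtwo i, card_empty]
            omega
          · beta_reduce
            rw [show 2*k+nc = 3*k+(nc-k) by omega, card_filter_range_add,
              card_filter_range_triple]
            beta_reduce
            rw [E0one i, E1one, E2z i 1 (by norm_num), EGone i, card_empty]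
            omega
          · intro c hc
            beta_reduce
            rcases lt_or_ge c (3*k) with h | h
            · rcases (show c%3=0 ∨ c%3=1 ∨ c%3=2 by omega) with hs|hs|hs
              · rw [encval i c h, if_pos hs]
                split_ifs <;> simp
              · rw [encval i c h, if_neg (by omega), if_pos hs,
                  if_neg (h4m (c/3) (by omega))]
                split_ifs <;> simp
              · rw [encval i c h, if_neg (by omega), if_neg (by omega)]
                simp
            · have hv := vg i (c-3*k)
              rw [show 3*k+(c-3*k) = c by omega] at hv
              rw [hv]
              exact hm (k+(c-3*k)) (by omega)
      · -- row case (iii)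
        beta_reduce at hc4 hm
        have h02 : ∀ j < nc, A i j = 0 ∨ A i j = 4 := by
          intro j hj
          have := hm j hj
          simpa only [Set.mem_insert_iff, Set.mem_singleton_iff] using this
        have hge4 : ∀ t < nc-k, A i (k+t) ≠ 4 := by
          intro t ht
          exact hnoK (k+t) (by omega) (by omega) i hi
        right; right
        constructor
        · have EG2 : ((range (nc-k)).filter fun t => scs1A k 4 A (2*k+i) (3*k+t) = 2)
              = ∅ := by
            rw [Finset.eq_empty_iff_forall_notMem]
            intro t
            simp only [mem_filter, mem_range, not_and]
            intro ht hp
            rw [vg i t] at hp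
            rcases h02 (k+t) (by omega) with h|h
            · rw [h] at hp; norm_num at hp
            · exact hge4 t ht h
          beta_reduce
          rw [show 2*k+nc = 3*k+(nc-k) by omega, card_filter_range_add,
            card_filter_range_triple]
          beta_reduce
          rw [E0two i, E1two i, E2z i 2 (by norm_num), EG2, card_empty]
          rw [show nc = k+(nc-k) by omega, card_filter_range_add] at hc4
          beta_reduce at hc4
          have hb4 : ((range (nc-k)).filter fun t => A i (k+t) = 4).card = 0 := by
            rw [Finset.card_eq_zero, Finset.eq_empty_iff_forall_notMem]
            intro t
            simp only [mem_filter, mem_range, not_and]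
            intro ht h
            exact hge4 t ht h
          omega
        · intro c hc
          beta_reduce
          rcases lt_or_ge c (3*k) with h | h
          · rcases (show c%3=0 ∨ c%3=1 ∨ c%3=2 by omega) with hs|hs|hs
            · rw [encval i c h, if_pos hs]
              rcases h02 (c/3) (by omega) with h1|h1 <;> rw [h1] <;>
                norm_num [Set.mem_insert_iff, Set.mem_singleton_iff]
            · rw [encval i c h, if_neg (by omega), if_pos hs]
              rcases h02 (c/3) (by omega) with h1|h1 <;> rw [h1] <;>
                norm_num [Set.mem_insert_iff, Set.mem_singleton_iff]
            · rw [encval i c h, if_neg (by omega), if_neg (by omega)]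
              simp
          · have hv := vg i (c-3*k)
            rw [show 3*k+(c-3*k) = c by omega] at hv
            rw [hv]
            rcases h02 (k+(c-3*k)) (by omega) with h1|h1
            · rw [h1]; simp
            · exact absurd h1 (hge4 (c-3*k) (by omega))
  refine ⟨part1, part2, ?_⟩
  intro r hr h2cnt c hc hval
  rcases lt_or_ge r (2*k) with htop | hge
  · exfalso
    have hsub : ((range (2*k+nc)).filter fun c' => scs1A k 4 A r c' = 2) ⊆ {3*(r/2)} := by
      intro c' hcm
      simp only [mem_filter, mem_range] at hcm
      obtain ⟨h1, hp⟩ := hcm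
      simp only [mem_singleton]
      rw [topval r htop] at hp
      split_ifs at hp <;> first | omega | norm_num at hp
    have hle := Finset.card_le_card hsub
    rw [card_singleton] at hle
    omega
  · obtain ⟨i, rfl⟩ : ∃ i, r = 2*k + i := ⟨r - 2*k, by omega⟩
    have hi : i < nr := by omega
    by_cases hcl : c < 3*k
    · have hkey : c % 3 = 1 ∧ A i (c/3) = 4 := by
        rcases (show c%3=0 ∨ c%3=1 ∨ c%3=2 by omega) with hs|hs|hs
        · exfalso
          rw [encval i c hcl, if_pos hs] at hval
          split_ifs at hval <;> norm_num at hval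
        · refine ⟨hs, ?_⟩
          rw [encval i c hcl, if_neg (by omega), if_pos hs] at hval
          by_contra h4
          rw [if_neg h4] at hval
          split_ifs at hval <;> norm_num at hval
        · exfalso
          rw [encval i c hcl, if_neg (by omega), if_neg (by omega)] at hval
          norm_num at hval
      obtain ⟨hs, h4⟩ := hkey
      have hjk : c/3 < k := by omega
      rw [card_filter_range_add]
      beta_reduce
      have htopf : ((range (2*k)).filter fun r' => scs1A k 4 A r' c = 1) = {2*(c/3)+1} := by
        ext r'
        simp only [mem_filter, mem_range, mem_singleton]
        constructor
        · rintro ⟨h1, hp⟩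
          rw [topval r' h1] at hp
          split_ifs at hp <;> first | omega | norm_num at hp
        · rintro rfl
          refine ⟨by omega, ?_⟩
          rw [topval _ (by omega), if_neg (by omega), if_pos (by omega),
            if_neg (show ¬ (2*(c/3)+1) % 2 = 0 by omega)]
      have hencf : ((range nr).filter fun i' => scs1A k 4 A (2*k+i') c = 1) = ∅ := by
        rw [Finset.eq_empty_iff_forall_notMem]
        intro i'
        simp only [mem_filter, mem_range, not_and]
        intro hi' hp
        rw [encval i' c hcl, if_neg (by omega), if_pos hs] at hp
        split_ifs at hp with ha hb
        · norm_num at hp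
        · exact hno2 (c/3) hjk i' hi' hb
        · norm_num at hp
      rw [htopf, hencf, card_singleton, card_empty]
    · exfalso
      rw [encge i c (by omega)] at hval
      rcases hS2 i hi with ⟨hm, -⟩ | ⟨hc2, -, hm⟩ | ⟨-, hm⟩
      · beta_reduce at hm
        rcases hm (c-2*k) (by omega) with h|h <;> rw [hval] at h <;> norm_num at h
      · beta_reduce at hc2
        rw [show 2*k+nc = 3*k+(nc-k) by omega, card_filter_range_add,
          card_filter_range_triple] at h2cnt
        beta_reduce at h2cnt
        have h4m : ∀ j < nc, A i j ≠ 4 := by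
          intro j hj h
          have := hm j hj
          simp only [Set.mem_insert_iff, Set.mem_singleton_iff, h] at this
          norm_num at this
        have hA4z : ((range k).filter fun j => A i j = 4) = ∅ := by
          rw [Finset.eq_empty_iff_forall_notMem]
          intro j
          simp only [mem_filter, mem_range, not_and]
          intro hj h
          exact h4m j (by omega) h
        rw [E0two i, E1two i, hA4z, E2z i 2 (by norm_num), EGtwo i, card_empty] at h2cnt
        rw [show nc = k+(nc-k) by omega, card_filter_range_add] at hc2
        beta_reduce at hc2
        omega
      · beta_reduce at hm
        have := hm (c-2*k) (by omega)
        simp only [Set.mem_insert_iff, Set.mem_singleton_iff, hval] at this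
        norm_num at this
end
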